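/- arXiv:1711.02871 — 6 statements merged into one kernel-verified Lean document; each statement's English description precedes it below -/
import Mathlib

section
/- Let r > 1 be a real number and suppose that the m-th prime p_m is r-mighty. Set u := ∏_{t=m+1}^∞ 1/(1 − p_t^{−r}). Then u < 1 + p_m^{−r}, the open interval (u, 1 + p_m^{−r}) is disjoint from the set σ_{−r}(ℕ⁺) = {σ_{−r}(n) : n ∈ ℕ⁺}, and both u and 1 + p_m^{−r} belong to the topological closure of σ_{−r}(ℕ⁺) in ℝ. -/
open scoped BigOperators

open Filter Topology Finset

/-- The divisor function `σ_{-r}(n) = ∑_{d ∣ n} d^{-r}`. -/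
noncomputable def sigmaNeg (r : ℝ) (n : ℕ) : ℝ := ∑ d ∈ n.divisors, (d : ℝ) ^ (-r)

/-- The range `σ_{-r}(ℕ⁺) = {σ_{-r}(n) : n ∈ ℕ⁺}`. -/
def sigmaSet (r : ℝ) : Set ℝ := {x | ∃ n : ℕ, 0 < n ∧ x = sigmaNeg r n}

/-- The product `∏_{q prime, q > p} 1/(1 - q^{-r})` over all primes greater than `p`. -/
noncomputable def mightyProd (r : ℝ) (p : ℕ) : ℝ :=
  ∏' q : {q : ℕ // q.Prime ∧ p < q}, (1 - ((q : ℕ) : ℝ) ^ (-r))⁻¹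

/-- A prime `p` is `r`-mighty if `1 + p^{-r} > ∏_{q prime, q > p} 1/(1 - q^{-r})`. -/
def IsMighty (r : ℝ) (p : ℕ) : Prop := 1 + (p : ℝ) ^ (-r) > mightyProd r p

/-! ### Auxiliary lemmas -/

noncomputable def gfun (r : ℝ) : ArithmeticFunction ℝ :=
  ⟨fun d => if d = 0 then 0 else (d : ℝ) ^ (-r), by simp⟩

lemma gfun_mult (r : ℝ) : (gfun r).IsMultiplicative := by
  constructor
  · simp [gfun]
  · intro m n _
    rcases eq_or_ne m 0 with rfl | hm; · simp [gfun]
    rcases eq_or_ne n 0 with rfl | hn; · simp [gfun]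
    simp only [gfun, ArithmeticFunction.coe_mk, if_neg hm, if_neg hn,
      if_neg (mul_ne_zero hm hn)]
    push_cast
    rw [Real.mul_rpow (by positivity) (by positivity)]

noncomputable def Ffun (r : ℝ) : ArithmeticFunction ℝ := ↑ArithmeticFunction.zeta * gfun r

lemma Ffun_apply (r : ℝ) (n : ℕ) : Ffun r n = sigmaNeg r n := by
  rw [Ffun, ArithmeticFunction.coe_zeta_mul_apply, sigmaNeg]
  refine Finset.sum_congr rfl fun d hd => ?_
  rw [gfun]
  simp only [ArithmeticFunction.coe_mk, if_neg (Nat.pos_of_mem_divisors hd).ne']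

lemma Ffun_mult (r : ℝ) : (Ffun r).IsMultiplicative :=
  (ArithmeticFunction.isMultiplicative_zeta.natCast).mul (gfun_mult r)

lemma sigmaNeg_prime_pow {r : ℝ} {q : ℕ} (hq : q.Prime) (k : ℕ) :
    sigmaNeg r (q ^ k) = ∑ e ∈ Finset.range (k + 1), ((q : ℝ) ^ (-r)) ^ e := by
  rw [sigmaNeg, Nat.divisors_prime_pow hq, Finset.sum_map]
  refine Finset.sum_congr rfl fun e _ => ?_
  simp only [Function.Embedding.coeFn_mk]
  push_cast
  rw [← Real.rpow_natCast (q : ℝ) e, ← Real.rpow_mul (by positivity), mul_comm,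
    Real.rpow_mul (by positivity), Real.rpow_natCast]

lemma sigmaNeg_prime {r : ℝ} {q : ℕ} (hq : q.Prime) :
    sigmaNeg r q = 1 + (q : ℝ) ^ (-r) := by
  have h := sigmaNeg_prime_pow (r := r) hq 1
  rw [pow_one] at h
  rw [h, Finset.sum_range_succ, Finset.sum_range_one, pow_zero, pow_one]

lemma xq_pos {r : ℝ} {q : ℕ} (hq : 0 < q) : 0 < (q : ℝ) ^ (-r) :=
  Real.rpow_pos_of_pos (by exact_mod_cast hq) _

lemma xq_le_half {r : ℝ} (hr : 1 < r) {q : ℕ} (hq : 2 ≤ q) : (q : ℝ) ^ (-r) ≤ 1 / 2 := by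
  rw [Real.rpow_neg (by positivity)]
  have h2 : (2 : ℝ) ≤ (q : ℝ) ^ r := by
    calc (2 : ℝ) ≤ (q : ℝ) := by exact_mod_cast hq
    _ = (q : ℝ) ^ (1 : ℝ) := (Real.rpow_one _).symm
    _ ≤ (q : ℝ) ^ r := Real.rpow_le_rpow_of_exponent_le
        (by exact_mod_cast hq.trans' one_le_two) hr.le
  rw [one_div]
  exact inv_anti₀ (by norm_num) h2

lemma one_sub_xq_pos {r : ℝ} (hr : 1 < r) {q : ℕ} (hq : 2 ≤ q) :
    0 < 1 - (q : ℝ) ^ (-r) := by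
  have := xq_le_half hr hq; linarith

lemma one_le_Fq {r : ℝ} (hr : 1 < r) {q : ℕ} (hq : 2 ≤ q) :
    1 ≤ (1 - (q : ℝ) ^ (-r))⁻¹ := by
  rw [one_le_inv_iff₀]
  have h1 := one_sub_xq_pos hr hq
  have h2 := xq_pos (show 0 < q by omega) (r := r)
  constructor <;> linarith

lemma Fq_le {r : ℝ} (hr : 1 < r) {q : ℕ} (hq : 2 ≤ q) :
    (1 - (q : ℝ) ^ (-r))⁻¹ ≤ 1 + 2 * (q : ℝ) ^ (-r) := by
  have h1 := one_sub_xq_pos hr hq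
  have h2 := xq_pos (show 0 < q by omega) (r := r)
  have h3 := xq_le_half hr hq
  rw [inv_le_iff_one_le_mul₀ h1]
  nlinarith

lemma sum_geom_le {x : ℝ} (h0 : 0 ≤ x) (h1 : x < 1) (m : ℕ) :
    ∑ e ∈ Finset.range m, x ^ e ≤ (1 - x)⁻¹ := by
  rw [← tsum_geometric_of_lt_one h0 h1]
  exact Summable.sum_le_tsum _ (fun i _ => pow_nonneg h0 i) (summable_geometric_of_lt_one h0 h1)

lemma summable_xq {r : ℝ} {p : ℕ} (hr : 1 < r) :
    Summable (fun q : {q : ℕ // q.Prime ∧ p < q} => ((q : ℕ) : ℝ) ^ (-r)) := by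
  have : Summable (fun n : ℕ => (n : ℝ) ^ (-r)) :=
    Real.summable_nat_rpow.mpr (by linarith)
  exact this.comp_injective Subtype.val_injective

lemma multipliable_Fq {r : ℝ} {p : ℕ} (hr : 1 < r) :
    Multipliable (fun q : {q : ℕ // q.Prime ∧ p < q} => (1 - ((q : ℕ) : ℝ) ^ (-r))⁻¹) := by
  set S := {q : ℕ // q.Prime ∧ p < q}
  set F : S → ℝ := fun q => (1 - ((q : ℕ) : ℝ) ^ (-r))⁻¹ with hF
  have h2 : ∀ q : S, 2 ≤ (q : ℕ) := fun q => q.2.1.two_le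
  have hF1 : ∀ q : S, 1 ≤ F q := fun q => one_le_Fq hr (h2 q)
  set G : S → NNReal := fun q => (F q).toNNReal with hG
  have hcoe : ∀ q : S, ((G q : ℝ)) = F q := fun q =>
    Real.coe_toNNReal _ ((zero_le_one.trans (hF1 q)))
  have hG1 : ∀ q : S, 1 ≤ G q := fun q => by
    rw [← NNReal.coe_le_coe, hcoe, NNReal.coe_one]; exact hF1 q
  set C : ℝ := ∑' q : S, ((q : ℕ) : ℝ) ^ (-r) with hC
  have hbdd : BddAbove (Set.range fun s : Finset S => ∏ q ∈ s, G q) := by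
    refine ⟨(Real.exp (2 * C)).toNNReal, ?_⟩
    rintro _ ⟨s, rfl⟩
    rw [← NNReal.coe_le_coe, NNReal.coe_prod,
      Real.coe_toNNReal _ (Real.exp_nonneg _)]
    calc ∏ q ∈ s, (G q : ℝ) = ∏ q ∈ s, F q := Finset.prod_congr rfl fun q _ => hcoe q
    _ ≤ ∏ q ∈ s, (1 + 2 * ((q : ℕ) : ℝ) ^ (-r)) :=
        Finset.prod_le_prod (fun q _ => zero_le_one.trans (hF1 q))
          (fun q _ => Fq_le hr (h2 q))
    _ ≤ ∏ q ∈ s, Real.exp (2 * ((q : ℕ) : ℝ) ^ (-r)) :=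
        Finset.prod_le_prod
          (fun q _ => by
            have := xq_pos (r := r) (show 0 < (q : ℕ) by have := h2 q; omega); positivity)
          (fun q _ => by
            have := Real.add_one_le_exp (2 * ((q : ℕ) : ℝ) ^ (-r)); linarith)
    _ = Real.exp (∑ q ∈ s, 2 * ((q : ℕ) : ℝ) ^ (-r)) := (Real.exp_sum _ _).symm
    _ ≤ Real.exp (2 * C) := by
        rw [Real.exp_le_exp, ← Finset.mul_sum]
        have hsum : ∑ q ∈ s, ((q : ℕ) : ℝ) ^ (-r) ≤ C :=
          Summable.sum_le_tsum s
            (fun q _ => (xq_pos (show 0 < (q : ℕ) by have := h2 q; omega)).le)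
            (summable_xq hr)
        linarith
  have hlub := isLUB_csSup (Set.range_nonempty _) hbdd
  have hprodG : HasProd G (sSup (Set.range fun s : Finset S => ∏ q ∈ s, G q)) :=
    hasProd_of_isLUB_of_one_le _ hG1 hlub
  have hprodF := hprodG.map NNReal.toRealHom.toMonoidHom NNReal.continuous_coe
  have heq : (NNReal.toRealHom.toMonoidHom ∘ G) = F := funext fun q => hcoe q
  rw [heq] at hprodF
  exact ⟨_, hprodF⟩

lemma prod_le_tprod_real {ι : Type*} {F : ι → ℝ} (hF1 : ∀ i, 1 ≤ F i)
    (hm : Multipliable F) (s : Finset ι) : ∏ i ∈ s, F i ≤ ∏' i, F i := by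
  classical
  refine ge_of_tendsto hm.hasProd (eventually_atTop.mpr ⟨s, fun t hst => ?_⟩)
  have h1 : (1 : ℝ) ≤ ∏ i ∈ t \ s, F i := by
    calc (1 : ℝ) = ∏ _i ∈ t \ s, (1 : ℝ) := (Finset.prod_const_one).symm
    _ ≤ ∏ i ∈ t \ s, F i :=
        Finset.prod_le_prod (fun _ _ => zero_le_one) (fun i _ => hF1 i)
  calc ∏ i ∈ s, F i ≤ (∏ i ∈ t \ s, F i) * ∏ i ∈ s, F i :=
        le_mul_of_one_le_left
          (Finset.prod_nonneg fun i _ => zero_le_one.trans (hF1 i)) h1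
  _ = ∏ i ∈ t, F i := Finset.prod_sdiff hst

lemma sigma_le_mighty {r : ℝ} {p : ℕ} (hr : 1 < r) {n : ℕ} (hn : n ≠ 0)
    (hbig : ∀ q ∈ n.primeFactors, p < q) : sigmaNeg r n ≤ mightyProd r p := by
  classical
  rw [← Ffun_apply, (Ffun_mult r).multiplicative_factorization (Ffun r) hn, Finsupp.prod]
  have hsupp : (Nat.factorization n).support = n.primeFactors :=
    Nat.support_factorization n
  rw [hsupp]
  have step1 : ∏ q ∈ n.primeFactors, Ffun r (q ^ (Nat.factorization n) q) ≤
      ∏ q ∈ n.primeFactors, (1 - (q : ℝ) ^ (-r))⁻¹ := by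
    refine Finset.prod_le_prod (fun q hq => ?_) (fun q hq => ?_)
    · rw [Ffun_apply, sigmaNeg]
      exact Finset.sum_nonneg fun d _ => Real.rpow_nonneg (Nat.cast_nonneg _) _
    · have hqp := Nat.prime_of_mem_primeFactors hq
      rw [Ffun_apply, sigmaNeg_prime_pow hqp]
      exact sum_geom_le (xq_pos hqp.pos).le
        (by have := xq_le_half hr hqp.two_le; linarith) _
  refine step1.trans ?_
  set S := {q : ℕ // q.Prime ∧ p < q}
  set F : S → ℝ := fun q => (1 - ((q : ℕ) : ℝ) ^ (-r))⁻¹ with hF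
  have h2 : ∀ q : S, 2 ≤ (q : ℕ) := fun q => q.2.1.two_le
  let e : {x // x ∈ n.primeFactors} ↪ S :=
    ⟨fun x => ⟨x.1, Nat.prime_of_mem_primeFactors x.2, hbig x.1 x.2⟩,
      by
        intro a b hab
        have : (a : ℕ) = (b : ℕ) := congrArg (fun z : {q : ℕ // q.Prime ∧ p < q} => (z : ℕ)) hab
        exact Subtype.ext this⟩
  have hprod : ∏ q ∈ n.primeFactors, (1 - (q : ℝ) ^ (-r))⁻¹ =
      ∏ q ∈ n.primeFactors.attach.map e, F q := by
    rw [Finset.prod_map]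
    exact (Finset.prod_attach _ _).symm
  rw [hprod]
  exact prod_le_tprod_real (fun q => one_le_Fq hr (h2 q)) (multipliable_Fq hr) _

lemma sigma_lower {r : ℝ} {p : ℕ} (hr : 1 < r) {n q : ℕ} (hn : n ≠ 0)
    (hq : q.Prime) (hqp : q ≤ p) (hqn : q ∣ n) :
    1 + (p : ℝ) ^ (-r) ≤ sigmaNeg r n := by
  classical
  have hp1 : 0 < p := hq.pos.trans_le hqp
  have hqx : (p : ℝ) ^ (-r) ≤ (q : ℝ) ^ (-r) := by
    rw [Real.rpow_neg (by positivity), Real.rpow_neg (by positivity)]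
    exact inv_anti₀ (Real.rpow_pos_of_pos (by exact_mod_cast hq.pos) _)
      (Real.rpow_le_rpow (by positivity) (by exact_mod_cast hqp) (by linarith))
  have hsub : ({1, q} : Finset ℕ) ⊆ n.divisors := by
    intro d hd
    rcases Finset.mem_insert.mp hd with rfl | hd
    · exact Nat.one_mem_divisors.mpr hn
    · rw [Finset.mem_singleton] at hd
      subst hd
      exact Nat.mem_divisors.mpr ⟨hqn, hn⟩
  calc 1 + (p : ℝ) ^ (-r) ≤ 1 + (q : ℝ) ^ (-r) := by linarith
  _ = ∑ d ∈ ({1, q} : Finset ℕ), (d : ℝ) ^ (-r) := by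
      rw [Finset.sum_pair hq.one_lt.ne]
      norm_num
  _ ≤ sigmaNeg r n :=
      Finset.sum_le_sum_of_subset_of_nonneg hsub
        (fun d _ _ => Real.rpow_nonneg (Nat.cast_nonneg _) _)

lemma partialprod_mem_closure {r : ℝ} {p : ℕ} (hr : 1 < r)
    (s : Finset {q : ℕ // q.Prime ∧ p < q}) :
    (∏ q ∈ s, (1 - ((q : ℕ) : ℝ) ^ (-r))⁻¹) ∈ closure (sigmaSet r) := by
  classical
  set N : ℕ → ℕ := fun k => ∏ q ∈ s, ((q : ℕ)) ^ k with hN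
  have hNpos : ∀ k, 0 < N k := fun k =>
    Finset.prod_pos fun q _ => pow_pos q.2.1.pos _
  have hσ : ∀ k, sigmaNeg r (N k) = ∏ q ∈ s, sigmaNeg r ((q : ℕ) ^ k) := by
    intro k
    rw [← Ffun_apply, hN]
    rw [ArithmeticFunction.IsMultiplicative.map_prod _ (Ffun_mult r) s ?_]
    · exact Finset.prod_congr rfl fun q _ => Ffun_apply r _
    · intro a _ b _ hab
      exact Nat.Coprime.pow _ _
        ((Nat.coprime_primes a.2.1 b.2.1).mpr fun h => hab (Subtype.ext h))
  have htend : Tendsto (fun k => ∏ q ∈ s, sigmaNeg r ((q : ℕ) ^ k)) atTop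
      (𝓝 (∏ q ∈ s, (1 - ((q : ℕ) : ℝ) ^ (-r))⁻¹)) := by
    refine tendsto_finset_prod s fun q _ => ?_
    have h0 := (xq_pos (r := r) q.2.1.pos).le
    have h1 : ((q : ℕ) : ℝ) ^ (-r) < 1 := by
      have := xq_le_half hr q.2.1.two_le; linarith
    have hgeo := (hasSum_geometric_of_lt_one h0 h1).tendsto_sum_nat
    have hcomp := hgeo.comp (tendsto_add_atTop_nat 1)
    have heq : ((fun n => ∑ e ∈ Finset.range n, (((q : ℕ) : ℝ) ^ (-r)) ^ e) ∘
        fun k => k + 1) = fun k => sigmaNeg r ((q : ℕ) ^ k) :=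
      funext fun k => (sigmaNeg_prime_pow q.2.1 k).symm
    rwa [heq] at hcomp
  refine mem_closure_of_tendsto htend (Eventually.of_forall fun k => ?_)
  exact ⟨N k, hNpos k, (hσ k).symm⟩

lemma mighty_mem_closure {r : ℝ} {p : ℕ} (hr : 1 < r) :
    mightyProd r p ∈ closure (sigmaSet r) := by
  have h := (multipliable_Fq (p := p) hr).hasProd
  have h2 := mem_closure_of_tendsto h
    (Eventually.of_forall fun s => partialprod_mem_closure hr s)
  rwa [closure_closure] at h2

lemma one_add_mem_closure {r : ℝ} {p : ℕ} (hr : 1 < r) (hp : p.Prime) :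
    (1 + (p : ℝ) ^ (-r)) ∈ closure (sigmaSet r) := by
  classical
  have hchoice : ∀ n : ℕ, ∃ t : ℕ, n + p + 1 ≤ t ∧ t.Prime := fun n =>
    Nat.exists_infinite_primes _
  choose t hle htp using hchoice
  have htgt : ∀ n, p < t n := fun n => by have := hle n; omega
  have hval : ∀ n, sigmaNeg r (p * t n) =
      (1 + (p : ℝ) ^ (-r)) * (1 + ((t n : ℕ) : ℝ) ^ (-r)) := by
    intro n
    have hcop : Nat.Coprime p (t n) :=
      (Nat.coprime_primes hp (htp n)).mpr (htgt n).ne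
    rw [← Ffun_apply, (Ffun_mult r).2 hcop, Ffun_apply, Ffun_apply,
      sigmaNeg_prime hp, sigmaNeg_prime (htp n)]
  have hx0 : Tendsto (fun n : ℕ => ((t n : ℕ) : ℝ) ^ (-r)) atTop (𝓝 0) := by
    have hsummable : Summable (fun n : ℕ => (n : ℝ) ^ (-r)) :=
      Real.summable_nat_rpow.mpr (by linarith)
    have hz := hsummable.tendsto_atTop_zero
    refine squeeze_zero (fun n => (xq_pos (htp n).pos).le) (fun n => ?_)
      (hz.comp (tendsto_add_atTop_nat 1))
    show ((t n : ℕ) : ℝ) ^ (-r) ≤ ((n + 1 : ℕ) : ℝ) ^ (-r)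
    rw [Real.rpow_neg (by positivity), Real.rpow_neg (by positivity)]
    refine inv_anti₀ (Real.rpow_pos_of_pos (by positivity) _) ?_
    refine Real.rpow_le_rpow (by positivity) ?_ (by linarith)
    have : n + 1 ≤ t n := by have := hle n; omega
    exact_mod_cast this
  have htend : Tendsto (fun n => sigmaNeg r (p * t n)) atTop
      (𝓝 (1 + (p : ℝ) ^ (-r))) := by
    have h1 : Tendsto (fun n : ℕ => (1 + (p : ℝ) ^ (-r)) *
        (1 + ((t n : ℕ) : ℝ) ^ (-r))) atTop
        (𝓝 ((1 + (p : ℝ) ^ (-r)) * (1 + 0))) :=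
      (tendsto_const_nhds.add hx0).const_mul _
    rw [add_zero, mul_one] at h1
    have heq : (fun n => sigmaNeg r (p * t n)) = fun n : ℕ =>
        (1 + (p : ℝ) ^ (-r)) * (1 + ((t n : ℕ) : ℝ) ^ (-r)) :=
      funext fun n => hval n
    rwa [heq]
  refine mem_closure_of_tendsto htend (Eventually.of_forall fun n => ?_)
  exact ⟨p * t n, Nat.mul_pos hp.pos (htp n).pos, rfl⟩

/-- If the prime `p = p_m` is `r`-mighty and `u = ∏_{t=m+1}^∞ 1/(1 - p_t^{-r})`, then
`u < 1 + p^{-r}`, the open interval `(u, 1 + p^{-r})` is disjoint from `σ_{-r}(ℕ⁺)`, and both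
endpoints lie in the closure of `σ_{-r}(ℕ⁺)`. -/
theorem stmt_0 (r : ℝ) (hr : 1 < r) (p : ℕ) (hp : p.Prime)
    (hmighty : IsMighty r p) (u : ℝ) (hu : u = mightyProd r p) :
    u < 1 + (p : ℝ) ^ (-r) ∧
    Set.Ioo u (1 + (p : ℝ) ^ (-r)) ∩ sigmaSet r = ∅ ∧
    u ∈ closure (sigmaSet r) ∧
    (1 + (p : ℝ) ^ (-r)) ∈ closure (sigmaSet r) := by
  subst hu
  refine ⟨hmighty, ?_, mighty_mem_closure hr, one_add_mem_closure hr hp⟩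
  rw [Set.eq_empty_iff_forall_notMem]
  rintro x ⟨⟨hxu, hxp⟩, n, hn, rfl⟩
  by_cases hbig : ∀ q ∈ n.primeFactors, p < q
  · have := sigma_le_mighty hr hn.ne' hbig
    linarith
  · push_neg at hbig
    obtain ⟨q, hqmem, hqle⟩ := hbig
    have := sigma_lower (p := p) hr hn.ne' (Nat.prime_of_mem_primeFactors hqmem)
      hqle (Nat.dvd_of_mem_primeFactors hqmem)
    linarith
end

section
/- Let r > 1 be a real number. Then the number of connected components of the topological closure of σ_{−r}(ℕ⁺) in ℝ is at least N_r + 1, where N_r is the number of r-mighty primes. -/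
open scoped BigOperators

section aux
variable {r : ℝ} (hr : 1 < r)

lemma xpos {q : ℕ} (hq : 0 < q) : 0 < ((q : ℕ) : ℝ) ^ (-r) :=
  Real.rpow_pos_of_pos (by exact_mod_cast hq) _

lemma xle_half (hr : 1 < r) {q : ℕ} (hq : 2 ≤ q) : ((q : ℕ) : ℝ) ^ (-r) ≤ 1 / 2 := by
  have h1 : ((q : ℕ) : ℝ) ^ (-r) ≤ (2 : ℝ) ^ (-r) :=
    Real.rpow_le_rpow_of_nonpos (by norm_num) (by exact_mod_cast hq) (by linarith)
  have h2 : (2 : ℝ) ^ (-r) ≤ (2 : ℝ) ^ (-1 : ℝ) :=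
    Real.rpow_le_rpow_of_exponent_le (by norm_num) (by linarith)
  have h3 : (2 : ℝ) ^ (-1 : ℝ) = 1 / 2 := by
    rw [Real.rpow_neg (by norm_num), Real.rpow_one]; norm_num
  calc ((q : ℕ) : ℝ) ^ (-r) ≤ (2 : ℝ) ^ (-r) := h1
    _ ≤ 1 / 2 := h3 ▸ h2

/-- auxiliary function: log of the Euler factor, cut off below 2 -/
noncomputable def Gfun (r : ℝ) (n : ℕ) : ℝ :=
  if 2 ≤ n then Real.log (1 - (n : ℝ) ^ (-r))⁻¹ else 0

lemma Gfun_nonneg (hr : 1 < r) (n : ℕ) : 0 ≤ Gfun r n := by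
  unfold Gfun
  split_ifs with h
  · have hx : (n : ℝ) ^ (-r) ≤ 1 / 2 := xle_half hr h
    have hx0 : 0 < (n : ℝ) ^ (-r) := xpos (by omega)
    apply Real.log_nonneg
    rw [le_inv_comm₀ one_pos (by linarith)]
    linarith
  · exact le_refl 0

lemma Gfun_le (hr : 1 < r) (n : ℕ) : Gfun r n ≤ 2 * (n : ℝ) ^ (-r) := by
  unfold Gfun
  split_ifs with h
  · set x := (n : ℝ) ^ (-r) with hxdef
    have hx : x ≤ 1 / 2 := xle_half hr h
    have hx0 : 0 < x := xpos (by omega)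
    have h1x : (0:ℝ) < 1 - x := by linarith
    have hlog : Real.log (1 - x)⁻¹ ≤ (1 - x)⁻¹ - 1 :=
      Real.log_le_sub_one_of_pos (by positivity)
    have hkey : (1 - x)⁻¹ ≤ 1 + 2 * x := by
      have h2 : (1 : ℝ) ≤ (1 + 2 * x) * (1 - x) := by nlinarith
      calc (1 - x)⁻¹ = 1 * (1 - x)⁻¹ := (one_mul _).symm
        _ ≤ ((1 + 2 * x) * (1 - x)) * (1 - x)⁻¹ :=
            mul_le_mul_of_nonneg_right h2 (by positivity)
        _ = 1 + 2 * x := by field_simp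
    linarith
  · positivity

lemma summable_Gfun (hr : 1 < r) : Summable (Gfun r) := by
  apply Summable.of_nonneg_of_le (Gfun_nonneg hr) (Gfun_le hr)
  exact (Real.summable_nat_rpow.mpr (by linarith)).mul_left 2
end aux

section aux2
variable {r : ℝ}

lemma hasProd_euler (hr : 1 < r) (p : ℕ) :
    HasProd (fun q : {q : ℕ // q.Prime ∧ p < q} => (1 - ((q : ℕ) : ℝ) ^ (-r))⁻¹)
      (Real.exp (∑' q : {q : ℕ // q.Prime ∧ p < q}, Gfun r q)) := by
  have hs : Summable (fun q : {q : ℕ // q.Prime ∧ p < q} => Gfun r q) :=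
    (summable_Gfun hr).comp_injective Subtype.val_injective
  have h := hs.hasSum.rexp
  have heq : (fun q : {q : ℕ // q.Prime ∧ p < q} => (1 - ((q : ℕ) : ℝ) ^ (-r))⁻¹)
      = Real.exp ∘ (fun q : {q : ℕ // q.Prime ∧ p < q} => Gfun r q) := by
    funext q
    have h2 : 2 ≤ (q : ℕ) := q.2.1.two_le
    have hx : ((q : ℕ) : ℝ) ^ (-r) ≤ 1 / 2 := xle_half hr h2
    have hx0 : 0 < ((q : ℕ) : ℝ) ^ (-r) := xpos (by omega)
    simp only [Function.comp, Gfun, if_pos h2]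
    rw [Real.exp_log (inv_pos.mpr (by linarith))]
  rw [heq]
  exact h

lemma mightyProd_eq (hr : 1 < r) (p : ℕ) :
    mightyProd r p = Real.exp (∑' q : {q : ℕ // q.Prime ∧ p < q}, Gfun r q) :=
  (hasProd_euler hr p).tprod_eq

lemma prod_le_mightyProd (hr : 1 < r) (p : ℕ)
    (s : Finset {q : ℕ // q.Prime ∧ p < q}) :
    ∏ q ∈ s, (1 - ((q : ℕ) : ℝ) ^ (-r))⁻¹ ≤ mightyProd r p := by
  have hs : Summable (fun q : {q : ℕ // q.Prime ∧ p < q} => Gfun r q) :=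
    (summable_Gfun hr).comp_injective Subtype.val_injective
  have h1 : ∏ q ∈ s, (1 - ((q : ℕ) : ℝ) ^ (-r))⁻¹
      = Real.exp (∑ q ∈ s, Gfun r q) := by
    rw [Real.exp_sum]
    apply Finset.prod_congr rfl
    intro q _
    have h2 : 2 ≤ (q : ℕ) := q.2.1.two_le
    have hx : ((q : ℕ) : ℝ) ^ (-r) ≤ 1 / 2 := xle_half hr h2
    have hx0 : 0 < ((q : ℕ) : ℝ) ^ (-r) := xpos (by omega)
    simp only [Gfun, if_pos h2]
    rw [Real.exp_log (inv_pos.mpr (by linarith))]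
  rw [h1, mightyProd_eq hr p]
  apply Real.exp_le_exp.mpr
  exact hs.sum_le_tsum s (fun q _ => Gfun_nonneg hr q)

lemma one_le_mightyProd (hr : 1 < r) (p : ℕ) : 1 ≤ mightyProd r p := by
  simpa using prod_le_mightyProd hr p ∅

lemma factor_le_mightyProd (hr : 1 < r) {p q : ℕ} (hq : q.Prime) (hpq : p < q) :
    (1 - (q : ℝ) ^ (-r))⁻¹ ≤ mightyProd r p := by
  simpa using prod_le_mightyProd hr p {(⟨q, hq, hpq⟩ : {q : ℕ // q.Prime ∧ p < q})}

end aux2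

section sigma
open ArithmeticFunction
open scoped ArithmeticFunction.zeta
variable {r : ℝ}

lemma sigmaNeg_nonneg (r : ℝ) (n : ℕ) : 0 ≤ sigmaNeg r n :=
  Finset.sum_nonneg fun d _ => Real.rpow_nonneg (Nat.cast_nonneg d) _

noncomputable def fpow (r : ℝ) : ArithmeticFunction ℝ :=
  ⟨fun n => if n = 0 then 0 else (n : ℝ) ^ (-r), by simp⟩

lemma fpow_apply (r : ℝ) (n : ℕ) : fpow r n = if n = 0 then 0 else (n : ℝ) ^ (-r) := rfl

lemma fpow_isMult (r : ℝ) : (fpow r).IsMultiplicative := by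
  constructor
  · rw [fpow_apply]; norm_num
  · intro m n _
    rw [fpow_apply, fpow_apply, fpow_apply]
    rcases eq_or_ne m 0 with rfl | hm
    · simp
    rcases eq_or_ne n 0 with rfl | hn
    · simp
    rw [if_neg (mul_ne_zero hm hn), if_neg hm, if_neg hn, Nat.cast_mul,
      Real.mul_rpow (Nat.cast_nonneg m) (Nat.cast_nonneg n)]

lemma sigmaNeg_eq_zeta_mul (r : ℝ) (n : ℕ) : sigmaNeg r n = (↑ζ * fpow r) n := by
  rw [ArithmeticFunction.coe_zeta_mul_apply]
  apply Finset.sum_congr rfl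
  intro d hd
  rw [fpow_apply, if_neg (Nat.pos_of_mem_divisors hd).ne']

lemma sigmaNeg_mult (r : ℝ) : (↑ζ * fpow r : ArithmeticFunction ℝ).IsMultiplicative :=
  (ArithmeticFunction.isMultiplicative_zeta.natCast).mul (fpow_isMult r)

lemma sigmaNeg_factor (r : ℝ) {n : ℕ} (hn : n ≠ 0) :
    sigmaNeg r n = ∏ q ∈ n.primeFactors, sigmaNeg r (q ^ n.factorization q) := by
  rw [sigmaNeg_eq_zeta_mul, (sigmaNeg_mult r).multiplicative_factorization _ hn,
    Finsupp.prod, Nat.support_factorization]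
  exact Finset.prod_congr rfl fun q _ => (sigmaNeg_eq_zeta_mul r _).symm

lemma sigmaNeg_prime_pow_le (hr : 1 < r) {q : ℕ} (hq : q.Prime) (k : ℕ) :
    sigmaNeg r (q ^ k) ≤ (1 - (q : ℝ) ^ (-r))⁻¹ := by
  set x := (q : ℝ) ^ (-r) with hxdef
  have hx0 : 0 < x := xpos hq.pos
  have hxh : x ≤ 1 / 2 := xle_half hr hq.two_le
  have h1x : (0:ℝ) < 1 - x := by linarith
  have hterm : ∀ i : ℕ, ((q ^ i : ℕ) : ℝ) ^ (-r) = x ^ i := by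
    intro i
    rw [hxdef]
    rw [Nat.cast_pow, ← Real.rpow_natCast (q:ℝ) i, ← Real.rpow_mul (Nat.cast_nonneg q),
      mul_comm, Real.rpow_mul (Nat.cast_nonneg q), Real.rpow_natCast]
  have hsum : sigmaNeg r (q ^ k) = ∑ i ∈ Finset.range (k + 1), x ^ i := by
    unfold sigmaNeg
    rw [Nat.sum_divisors_prime_pow hq]
    exact Finset.sum_congr rfl fun i _ => hterm i
  rw [hsum]
  have hmul := geom_sum_mul x (k + 1)
  have hpow : 0 ≤ x ^ (k + 1) := by positivity
  have h2 : (∑ i ∈ Finset.range (k + 1), x ^ i) * (1 - x) ≤ 1 := by nlinarith [hmul]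
  calc (∑ i ∈ Finset.range (k + 1), x ^ i)
      = (∑ i ∈ Finset.range (k + 1), x ^ i) * (1 - x) * (1 - x)⁻¹ := by field_simp
    _ ≤ 1 * (1 - x)⁻¹ := mul_le_mul_of_nonneg_right h2 (by positivity)
    _ = (1 - x)⁻¹ := one_mul _

lemma sigmaNeg_le_mightyProd (hr : 1 < r) {p n : ℕ} (hn : n ≠ 0)
    (h : ∀ q ∈ n.primeFactors, p < q) : sigmaNeg r n ≤ mightyProd r p := by
  classical
  rw [sigmaNeg_factor r hn]
  have step1 : ∏ q ∈ n.primeFactors, sigmaNeg r (q ^ n.factorization q)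
      ≤ ∏ q ∈ n.primeFactors, (1 - (q:ℝ) ^ (-r))⁻¹ :=
    Finset.prod_le_prod (fun q _ => sigmaNeg_nonneg r _)
      (fun q hq => sigmaNeg_prime_pow_le hr (Nat.prime_of_mem_primeFactors hq) _)
  refine le_trans step1 ?_
  have hinj : Function.Injective
      (fun q : {x // x ∈ n.primeFactors} =>
        (⟨q.1, Nat.prime_of_mem_primeFactors q.2, h q.1 q.2⟩ : {q : ℕ // q.Prime ∧ p < q})) :=
    fun a b hab => by
      apply Subtype.ext
      have h2 := congrArg Subtype.val hab
      simpa using h2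
  set s : Finset {q : ℕ // q.Prime ∧ p < q} :=
    n.primeFactors.attach.map
      ⟨fun q => ⟨q.1, Nat.prime_of_mem_primeFactors q.2, h q.1 q.2⟩, hinj⟩ with hs
  have hps : ∏ q ∈ n.primeFactors, (1 - (q:ℝ) ^ (-r))⁻¹
      = ∏ q ∈ s, (1 - ((q:ℕ):ℝ) ^ (-r))⁻¹ := by
    rw [hs, Finset.prod_map]
    exact (Finset.prod_attach n.primeFactors (fun q => (1 - (q:ℝ) ^ (-r))⁻¹)).symm
  rw [hps]
  exact prod_le_mightyProd hr p s

lemma le_sigmaNeg {q n : ℕ} (hq : q.Prime) (hqn : q ∣ n) (hn : n ≠ 0) :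
    1 + (q : ℝ) ^ (-r) ≤ sigmaNeg r n := by
  have hsub : ({1, q} : Finset ℕ) ⊆ n.divisors := by
    intro d hd
    rcases Finset.mem_insert.mp hd with rfl | hd
    · exact Nat.one_mem_divisors.mpr hn
    · rw [Finset.mem_singleton] at hd; subst hd
      exact Nat.mem_divisors.mpr ⟨hqn, hn⟩
  have hpair : ∑ d ∈ ({1, q} : Finset ℕ), (d:ℝ) ^ (-r) = 1 + (q:ℝ) ^ (-r) := by
    rw [Finset.sum_pair hq.one_lt.ne]
    norm_num
  rw [← hpair]
  exact Finset.sum_le_sum_of_subset_of_nonneg hsub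
    (fun d _ _ => Real.rpow_nonneg (Nat.cast_nonneg d) _)

lemma one_mem_sigmaSet (r : ℝ) : (1:ℝ) ∈ sigmaSet r :=
  ⟨1, one_pos, by simp [sigmaNeg]⟩

lemma prime_mem_sigmaSet (r : ℝ) {p : ℕ} (hp : p.Prime) :
    (1 + (p:ℝ) ^ (-r)) ∈ sigmaSet r := by
  refine ⟨p, hp.pos, ?_⟩
  unfold sigmaNeg
  rw [hp.divisors, Finset.sum_pair hp.one_lt.ne]
  norm_num

lemma closure_subset_gap (hr : 1 < r) {p : ℕ} (hp : p.Prime) :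
    closure (sigmaSet r) ⊆ Set.Iic (mightyProd r p) ∪ Set.Ici (1 + (p:ℝ) ^ (-r)) := by
  apply closure_minimal
  · rintro x ⟨n, hn, rfl⟩
    by_cases h : ∀ q ∈ n.primeFactors, p < q
    · exact Or.inl (sigmaNeg_le_mightyProd hr hn.ne' h)
    · push_neg at h
      obtain ⟨q, hqmem, hqle⟩ := h
      have hq : q.Prime := Nat.prime_of_mem_primeFactors hqmem
      have h1 : (p:ℝ) ^ (-r) ≤ (q:ℝ) ^ (-r) :=
        Real.rpow_le_rpow_of_nonpos (by exact_mod_cast hq.pos) (by exact_mod_cast hqle)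
          (by linarith)
      have h2 := le_sigmaNeg (r := r) hq (Nat.dvd_of_mem_primeFactors hqmem) hn.ne'
      exact Or.inr (by simp only [Set.mem_Ici]; linarith)
  · exact isClosed_Iic.union isClosed_Ici

lemma one_add_le_inv (hr : 1 < r) {q : ℕ} (hq : 2 ≤ q) :
    1 + (q:ℝ) ^ (-r) ≤ (1 - (q:ℝ) ^ (-r))⁻¹ := by
  set x := (q : ℝ) ^ (-r) with hxdef
  have hx0 : 0 < x := xpos (by omega)
  have hxh : x ≤ 1 / 2 := xle_half hr hq
  have h1x : (0:ℝ) < 1 - x := by linarith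
  have h2 : (1 + x) * (1 - x) ≤ 1 := by nlinarith
  calc 1 + x = (1 + x) * (1 - x) * (1 - x)⁻¹ := by field_simp
    _ ≤ 1 * (1 - x)⁻¹ := mul_le_mul_of_nonneg_right h2 (by positivity)
    _ = (1 - x)⁻¹ := one_mul _

end sigma

lemma components_ne {A : Set ℝ} (x y : A) (c : ℝ) (hxc : (x:ℝ) < c) (hcy : c < (y:ℝ))
    (hc : c ∉ A) :
    (ConnectedComponents.mk x : ConnectedComponents A) ≠ ConnectedComponents.mk y := by
  intro h
  rw [ConnectedComponents.coe_eq_coe] at h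
  have hy : y ∈ connectedComponent x := h.symm ▸ mem_connectedComponent
  have hK : IsPreconnected ((↑) '' connectedComponent x : Set ℝ) :=
    isPreconnected_connectedComponent.image _ continuous_subtype_val.continuousOn
  have hc' : c ∈ ((↑) '' connectedComponent x : Set ℝ) :=
    hK.ordConnected.out ⟨x, mem_connectedComponent, rfl⟩ ⟨y, hy, rfl⟩ ⟨hxc.le, hcy.le⟩
  obtain ⟨z, -, hz⟩ := hc'
  exact hc (hz ▸ z.2)


/-- The number of connected components of the closure of `σ_{-r}(ℕ⁺)` is at least `N_r + 1`,
where `N_r` is the number of `r`-mighty primes. -/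
theorem stmt_1 (r : ℝ) (hr : 1 < r) :
    (({p : ℕ | p.Prime ∧ IsMighty r p}.ncard + 1 : ℕ) : Cardinal) ≤
      Cardinal.mk (ConnectedComponents ↥(closure (sigmaSet r))) := by
  classical
  set A := closure (sigmaSet r) with hA
  have h1A : (1:ℝ) ∈ A := subset_closure (one_mem_sigmaSet r)
  set M := {p : ℕ | p.Prime ∧ IsMighty r p} with hM
  have hcut : ∀ p : ℕ, p ∈ M → ∃ c : ℝ, 1 < c ∧ c < 1 + (p:ℝ) ^ (-r) ∧ c ∉ A ∧
      ∀ q : ℕ, q ∈ M → p < q → 1 + (q:ℝ) ^ (-r) < c := by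
    intro p hp
    obtain ⟨hpp, hpm⟩ := hp
    have hmm : mightyProd r p < 1 + (p:ℝ) ^ (-r) := hpm
    have hx0 : 0 < (p:ℝ) ^ (-r) := xpos hpp.pos
    have hone : 1 ≤ mightyProd r p := one_le_mightyProd hr p
    refine ⟨(mightyProd r p + (1 + (p:ℝ) ^ (-r))) / 2, by linarith, by linarith, ?_, ?_⟩
    · intro hcA
      rcases closure_subset_gap hr hpp hcA with h | h
      · rw [Set.mem_Iic] at h; linarith
      · rw [Set.mem_Ici] at h; linarith
    · intro q hq hpq
      have h1 : 1 + (q:ℝ) ^ (-r) ≤ (1 - (q:ℝ) ^ (-r))⁻¹ := one_add_le_inv hr hq.1.two_le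
      have h2 : (1 - (q:ℝ) ^ (-r))⁻¹ ≤ mightyProd r p := factor_le_mightyProd hr hq.1 hpq
      linarith
  by_cases hfin : M.Finite
  · haveI := hfin.fintype
    have hinj : Function.Injective (fun o : Option ↥M => ConnectedComponents.mk
        (Option.elim o (⟨1, h1A⟩ : ↥A)
          (fun p => ⟨1 + ((p:ℕ):ℝ) ^ (-r), subset_closure (prime_mem_sigmaSet r p.2.1)⟩))) := by
      intro a b hab
      match a, b with
      | none, none => rfl
      | none, some p =>
        obtain ⟨c, hc1, hc2, hcA, -⟩ := hcut p p.2
        exact absurd hab (components_ne _ _ c hc1 hc2 hcA)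
      | some p, none =>
        obtain ⟨c, hc1, hc2, hcA, -⟩ := hcut p p.2
        exact absurd hab.symm (components_ne _ _ c hc1 hc2 hcA)
      | some p, some q =>
        rcases lt_trichotomy (p:ℕ) (q:ℕ) with hlt | heq | hlt
        · obtain ⟨c, -, hc2, hcA, hbig⟩ := hcut p p.2
          exact absurd hab.symm (components_ne _ _ c (hbig q q.2 hlt) hc2 hcA)
        · have : p = q := Subtype.ext heq
          rw [this]
        · obtain ⟨c, -, hc2, hcA, hbig⟩ := hcut q q.2
          exact absurd hab (components_ne _ _ c (hbig p p.2 hlt) hc2 hcA)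
    have hle := Cardinal.mk_le_of_injective hinj
    rw [Cardinal.mk_option] at hle
    have hcard : (Cardinal.mk ↥M) = (M.ncard : Cardinal) := by
      rw [Cardinal.mk_fintype, ← Nat.card_eq_fintype_card, Nat.card_coe_set_eq]
    rw [hcard] at hle
    have hcast : ((M.ncard + 1 : ℕ) : Cardinal) = (M.ncard : Cardinal) + 1 := by push_cast; rfl
    rw [hcast]
    exact hle
  · have h0 : M.ncard = 0 := Set.Infinite.ncard hfin
    rw [h0]
    have hone : ((0 + 1 : ℕ) : Cardinal) = 1 := by norm_num
    rw [hone, Cardinal.one_le_iff_ne_zero, Cardinal.mk_ne_zero_iff]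
    exact ⟨ConnectedComponents.mk ⟨1, h1A⟩⟩
end

section
/- Let r > 1 be a real number and let Q be a prime with Q < r. Then Q is r-mighty; that is, writing Q = p_m, we have 1 + Q^{−r} > ∏_{t=m+1}^∞ 1/(1 − p_t^{−r}). -/
open scoped BigOperators

open Real Finset

/-- One-step telescoping estimate. -/
lemma mighty_tele {r : ℝ} (hr : 2 ≤ r) {a : ℝ} (ha : 1 ≤ a) :
    (r - 1) * (a + 1) ^ (-r) ≤ a ^ (1 - r) - (a + 1) ^ (1 - r) := by
  have ha0 : (0:ℝ) < a := by linarith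
  have hb0 : (0:ℝ) < a + 1 := by linarith
  set A := a ^ (r - 1) with hA
  set B := (a + 1) ^ (r - 1) with hB
  have hApos : 0 < A := rpow_pos_of_pos ha0 _
  have hBpos : 0 < B := rpow_pos_of_pos hb0 _
  have hber : 1 + (r - 1) * (1 / a) ≤ (1 + 1 / a) ^ (r - 1) :=
    one_add_mul_self_le_rpow_one_add (by
      have := one_div_nonneg.mpr ha0.le; linarith) (by linarith)
  have heq : (1 : ℝ) + 1 / a = (a + 1) / a := by field_simp
  rw [heq, Real.div_rpow hb0.le ha0.le] at hber
  have h2 : A + A * ((r - 1) / a) ≤ B := by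
    have := mul_le_mul_of_nonneg_left hber hApos.le
    calc A + A * ((r - 1) / a) = A * (1 + (r - 1) * (1 / a)) := by ring
      _ ≤ A * (B / A) := this
      _ = B := by field_simp
  have e1 : a ^ (1 - r) = A⁻¹ := by
    rw [show (1 - r) = -(r - 1) by ring, Real.rpow_neg ha0.le]
  have e2 : (a + 1) ^ (1 - r) = B⁻¹ := by
    rw [show (1 - r) = -(r - 1) by ring, Real.rpow_neg hb0.le]
  have e3 : (a + 1) ^ (-r) = B⁻¹ * (a + 1)⁻¹ := by
    rw [show (-r) = -(r - 1) + -1 by ring, Real.rpow_add hb0, Real.rpow_neg hb0.le,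
      Real.rpow_neg_one]
  rw [e1, e2, e3]
  have e4 : A⁻¹ - B⁻¹ = (B - A) / (A * B) := by
    field_simp
  have h5 : (A * ((r - 1) / a)) / (A * B) ≤ (B - A) / (A * B) :=
    (div_le_div_iff_of_pos_right (by positivity)).mpr (by linarith)
  have e6 : (A * ((r - 1) / a)) / (A * B) = (r - 1) / (a * B) := by
    field_simp
  have h7 : (r - 1) * (B⁻¹ * (a + 1)⁻¹) ≤ (r - 1) / (a * B) := by
    have hstep : B⁻¹ * (a + 1)⁻¹ ≤ B⁻¹ * a⁻¹ := by
      apply mul_le_mul_of_nonneg_left _ (by positivity : (0:ℝ) ≤ B⁻¹)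
      exact inv_anti₀ ha0 (by linarith)
    calc (r - 1) * (B⁻¹ * (a + 1)⁻¹) ≤ (r - 1) * (B⁻¹ * a⁻¹) :=
          mul_le_mul_of_nonneg_left hstep (by linarith)
      _ = (r - 1) / (a * B) := by rw [div_eq_mul_inv, mul_inv]; ring
  linarith [e4, e6, h5, h7]

/-- Partial sums of `∑ (3+2j)^{-r}` are at most `(9/4)·3^{-r}`. -/
lemma mighty_sum2 {r : ℝ} (hr : 2 ≤ r) (s : Finset ℕ) :
    ∑ j ∈ s, ((3 + 2 * j : ℕ) : ℝ) ^ (-r) ≤ 9 / 4 * (3 : ℝ) ^ (-r) := by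
  obtain ⟨N, hN⟩ := s.exists_nat_subset_range
  have hterm : ∀ j : ℕ, ((3 + 2 * j : ℕ) : ℝ) ^ (-r) ≤
      9 / 4 * (3 : ℝ) ^ (-r) * (((j : ℝ) + 1)⁻¹ - ((j : ℝ) + 2)⁻¹) := by
    intro j
    have hj : (0:ℝ) ≤ (j : ℝ) := Nat.cast_nonneg j
    have hcast : ((3 + 2 * j : ℕ) : ℝ) = 3 + 2 * (j : ℝ) := by push_cast; ring
    set n : ℝ := 3 + 2 * (j : ℝ) with hn
    have hn3 : (3:ℝ) ≤ n := by simp only [hn]; linarith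
    have hn0 : (0:ℝ) < n := by linarith
    have split : n ^ (-r) = n ^ (2 - r) * n ^ (-(2:ℝ)) := by
      rw [← Real.rpow_add hn0]; ring_nf
    have h1 : n ^ (2 - r) ≤ (3:ℝ) ^ (2 - r) :=
      rpow_le_rpow_of_nonpos (by norm_num) hn3 (by linarith)
    have h2 : n ^ (-(2:ℝ)) = (n ^ (2:ℕ))⁻¹ := by
      rw [Real.rpow_neg hn0.le, show ((2:ℝ)) = ((2:ℕ):ℝ) by norm_num, Real.rpow_natCast]
    have h3 : (n ^ (2:ℕ))⁻¹ ≤ 1 / 4 * (((j : ℝ) + 1)⁻¹ - ((j : ℝ) + 2)⁻¹) := by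
      have e : 1 / 4 * (((j : ℝ) + 1)⁻¹ - ((j : ℝ) + 2)⁻¹)
          = (4 * (((j:ℝ) + 1) * ((j:ℝ) + 2)))⁻¹ := by
        have hA : ((j:ℝ) + 1) ≠ 0 := by positivity
        have hB : ((j:ℝ) + 2) ≠ 0 := by positivity
        field_simp
        ring
      rw [e]
      apply inv_anti₀ (by positivity)
      simp only [hn]; nlinarith
    have h32 : (3:ℝ) ^ (2 - r) = 9 * (3:ℝ) ^ (-r) := by
      rw [show (2 - r : ℝ) = 2 + (-r) by ring, Real.rpow_add (by norm_num),
        show ((2:ℝ)) = ((2:ℕ):ℝ) by norm_num, Real.rpow_natCast]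
      norm_num
    calc ((3 + 2 * j : ℕ) : ℝ) ^ (-r) = n ^ (2 - r) * n ^ (-(2:ℝ)) := by
          rw [hcast, ← split]
      _ ≤ (3:ℝ) ^ (2 - r) * (1 / 4 * (((j : ℝ) + 1)⁻¹ - ((j : ℝ) + 2)⁻¹)) := by
          apply mul_le_mul h1 (by rw [h2]; exact h3) (by positivity) (by positivity)
      _ = 9 / 4 * (3 : ℝ) ^ (-r) * (((j : ℝ) + 1)⁻¹ - ((j : ℝ) + 2)⁻¹) := by
          rw [h32]; ring
  have htele : ∑ j ∈ Finset.range N, (((j : ℝ) + 1)⁻¹ - ((j : ℝ) + 2)⁻¹) ≤ 1 := by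
    have := Finset.sum_range_sub' (fun j : ℕ => ((j : ℝ) + 1)⁻¹) N
    calc ∑ j ∈ Finset.range N, (((j : ℝ) + 1)⁻¹ - ((j : ℝ) + 2)⁻¹)
        = ∑ j ∈ Finset.range N, ((fun j : ℕ => ((j : ℝ) + 1)⁻¹) j
            - (fun j : ℕ => ((j : ℝ) + 1)⁻¹) (j + 1)) := by
          apply Finset.sum_congr rfl; intro j _; push_cast; ring_nf
      _ = ((0:ℝ) + 1)⁻¹ - ((N : ℝ) + 1)⁻¹ := by rw [this]; norm_num
      _ ≤ 1 := by
          have : (0:ℝ) ≤ ((N : ℝ) + 1)⁻¹ := by positivity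
          norm_num; linarith
  calc ∑ j ∈ s, ((3 + 2 * j : ℕ) : ℝ) ^ (-r)
      ≤ ∑ j ∈ Finset.range N, ((3 + 2 * j : ℕ) : ℝ) ^ (-r) := by
        apply Finset.sum_le_sum_of_subset_of_nonneg hN
        intro i _ _; positivity
    _ ≤ ∑ j ∈ Finset.range N, 9 / 4 * (3 : ℝ) ^ (-r) * (((j : ℝ) + 1)⁻¹ - ((j : ℝ) + 2)⁻¹) :=
        Finset.sum_le_sum fun j _ => hterm j
    _ = 9 / 4 * (3 : ℝ) ^ (-r) * ∑ j ∈ Finset.range N, (((j : ℝ) + 1)⁻¹ - ((j : ℝ) + 2)⁻¹) := by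
        rw [Finset.mul_sum]
    _ ≤ 9 / 4 * (3 : ℝ) ^ (-r) * 1 := by
        apply mul_le_mul_of_nonneg_left htele (by positivity)
    _ = 9 / 4 * (3 : ℝ) ^ (-r) := by ring

/-- Partial sums of `∑ (K+1+2j)^{-r}` are at most `(r-1)⁻¹ K^{1-r}`. -/
lemma mighty_sum3 {r : ℝ} (hr : 2 ≤ r) {K : ℕ} (hK : 1 ≤ K) (s : Finset ℕ) :
    ∑ j ∈ s, ((K + 1 + 2 * j : ℕ) : ℝ) ^ (-r) ≤ (r - 1)⁻¹ * (K : ℝ) ^ (1 - r) := by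
  obtain ⟨N, hN⟩ := s.exists_nat_subset_range
  have hr1 : (0:ℝ) < r - 1 := by linarith
  set f : ℕ → ℝ := fun j => ((K : ℝ) + 2 * j) ^ (1 - r) with hf
  have hterm : ∀ j : ℕ, ((K + 1 + 2 * j : ℕ) : ℝ) ^ (-r) ≤ (r - 1)⁻¹ * (f j - f (j + 1)) := by
    intro j
    have hK1 : (1:ℝ) ≤ (K : ℝ) := by exact_mod_cast hK
    have hj : (0:ℝ) ≤ (j : ℝ) := Nat.cast_nonneg j
    set a : ℝ := (K : ℝ) + 2 * j with ha
    have ha1 : (1:ℝ) ≤ a := by simp only [ha]; linarith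
    have hcast : ((K + 1 + 2 * j : ℕ) : ℝ) = a + 1 := by simp only [ha]; push_cast; ring
    have h1 : (r - 1) * (a + 1) ^ (-r) ≤ a ^ (1 - r) - (a + 1) ^ (1 - r) :=
      mighty_tele hr ha1
    have h2 : (a + 2) ^ (1 - r) ≤ (a + 1) ^ (1 - r) :=
      rpow_le_rpow_of_nonpos (by linarith) (by linarith) (by linarith)
    have hfj : f j = a ^ (1 - r) := by simp only [hf, ha]
    have hfj1 : f (j + 1) = (a + 2) ^ (1 - r) := by
      simp only [hf, ha]; push_cast; ring_nf
    rw [hcast, hfj, hfj1, show (r - 1)⁻¹ * (a ^ (1 - r) - (a + 2) ^ (1 - r))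
      = (a ^ (1 - r) - (a + 2) ^ (1 - r)) / (r - 1) by ring]
    rw [le_div_iff₀ hr1] at *
    · calc (a + 1) ^ (-r) * (r - 1) = (r - 1) * (a + 1) ^ (-r) := by ring
        _ ≤ a ^ (1 - r) - (a + 1) ^ (1 - r) := h1
        _ ≤ a ^ (1 - r) - (a + 2) ^ (1 - r) := by linarith
  have hfN : 0 ≤ f N := by
    apply rpow_nonneg
    have : (0:ℝ) ≤ (K:ℝ) := Nat.cast_nonneg K
    positivity
  have hf0 : f 0 = (K : ℝ) ^ (1 - r) := by simp [hf]
  calc ∑ j ∈ s, ((K + 1 + 2 * j : ℕ) : ℝ) ^ (-r)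
      ≤ ∑ j ∈ Finset.range N, ((K + 1 + 2 * j : ℕ) : ℝ) ^ (-r) := by
        apply Finset.sum_le_sum_of_subset_of_nonneg hN
        intro i _ _; positivity
    _ ≤ ∑ j ∈ Finset.range N, (r - 1)⁻¹ * (f j - f (j + 1)) :=
        Finset.sum_le_sum fun j _ => hterm j
    _ = (r - 1)⁻¹ * (f 0 - f N) := by rw [← Finset.mul_sum, Finset.sum_range_sub']
    _ ≤ (r - 1)⁻¹ * f 0 := by
        apply mul_le_mul_of_nonneg_left _ (by positivity)
        linarith
    _ = (r - 1)⁻¹ * (K : ℝ) ^ (1 - r) := by rw [hf0]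

lemma mighty_final2 {r : ℝ} (h : 2 < r) : 9 / 4 * (3 : ℝ) ^ (-r) < (2 : ℝ) ^ (-r) := by
  have h3 : (0:ℝ) < 3 ^ r := rpow_pos_of_pos (by norm_num) _
  have h2 : (0:ℝ) < 2 ^ r := rpow_pos_of_pos (by norm_num) _
  have key : (9:ℝ) / 4 * 2 ^ r < 3 ^ r := by
    have e3 : (3:ℝ) ^ r = (3 / 2) ^ r * 2 ^ r := by
      rw [← Real.mul_rpow (by norm_num) (by norm_num)]; norm_num
    rw [e3]
    have h94 : (9:ℝ) / 4 < (3 / 2) ^ r := by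
      have hlt : ((3:ℝ) / 2) ^ (2:ℝ) < (3 / 2) ^ r :=
        Real.rpow_lt_rpow_of_exponent_lt (by norm_num) h
      have e : ((3:ℝ) / 2) ^ (2:ℝ) = 9 / 4 := by
        rw [show (2:ℝ) = ((2:ℕ):ℝ) by norm_num, Real.rpow_natCast]; norm_num
      linarith
    exact mul_lt_mul_of_pos_right h94 h2
  rw [Real.rpow_neg (by norm_num : (0:ℝ) ≤ 3), Real.rpow_neg (by norm_num : (0:ℝ) ≤ 2),
    show (9:ℝ)/4 * ((3:ℝ)^r)⁻¹ = (9/4) / 3^r by ring, show ((2:ℝ)^r)⁻¹ = 1 / 2^r by ring,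
    div_lt_div_iff₀ h3 h2]
  linarith

lemma mighty_final3 {r q : ℝ} (hq : 3 ≤ q) (hqr : q < r) :
    (r - 1)⁻¹ * (q + 1) ^ (1 - r) < q ^ (-r) := by
  have h0q : (0:ℝ) < q := by linarith
  have h1q : (0:ℝ) < q + 1 := by linarith
  have hpos : (0:ℝ) < (q + 1) ^ (-r) := rpow_pos_of_pos h1q _
  have e1 : (q + 1) ^ (1 - r) = (q + 1) * (q + 1) ^ (-r) := by
    rw [show (1 - r) = 1 + (-r) by ring, Real.rpow_add h1q, Real.rpow_one]
  have h2 : (q + 1) / (r - 1) < 2 := by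
    rw [div_lt_iff₀ (by linarith)]; linarith
  have h3 : (2:ℝ) ≤ (1 + 1 / q) ^ r := by
    have hber : 1 + r * (1 / q) ≤ (1 + 1 / q) ^ r :=
      one_add_mul_self_le_rpow_one_add (by
        have : (0:ℝ) ≤ 1 / q := by positivity
        linarith) (by linarith)
    have hrq : (1:ℝ) ≤ r * (1 / q) := by
      rw [mul_one_div, le_div_iff₀ h0q]; linarith
    linarith
  have e2 : (1 + 1 / q) ^ r * (q + 1) ^ (-r) = q ^ (-r) := by
    rw [show (1:ℝ) + 1 / q = (q + 1) / q by field_simp]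
    rw [Real.div_rpow h1q.le h0q.le, Real.rpow_neg h1q.le, Real.rpow_neg h0q.le]
    have hq0 : q ^ r ≠ 0 := by positivity
    have hq10 : (q + 1) ^ r ≠ 0 := by positivity
    field_simp
  calc (r - 1)⁻¹ * (q + 1) ^ (1 - r) = (q + 1) / (r - 1) * (q + 1) ^ (-r) := by
        rw [e1]; ring
    _ < 2 * (q + 1) ^ (-r) := mul_lt_mul_of_pos_right h2 hpos
    _ ≤ (1 + 1 / q) ^ r * (q + 1) ^ (-r) := mul_le_mul_of_nonneg_right h3 hpos.le
    _ = q ^ (-r) := e2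

/-- The completely multiplicative function `n ↦ n^{-r}` supported on integers coprime to `Q!`. -/
noncomputable def mightyF (r : ℝ) (Q : ℕ) : ℕ →*₀ ℝ where
  toFun n := if Nat.Coprime n (Nat.factorial Q) ∧ n ≠ 0 then (n : ℝ) ^ (-r) else 0
  map_zero' := by simp
  map_one' := by
    simp [Nat.coprime_one_left]
  map_mul' := by
    intro m n
    by_cases hm : Nat.Coprime m (Nat.factorial Q) ∧ m ≠ 0
    · by_cases hn : Nat.Coprime n (Nat.factorial Q) ∧ n ≠ 0
      · rw [if_pos ⟨Nat.Coprime.mul hm.1 hn.1, mul_ne_zero hm.2 hn.2⟩, if_pos hm, if_pos hn,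
          Nat.cast_mul, Real.mul_rpow (Nat.cast_nonneg m) (Nat.cast_nonneg n)]
      · rw [if_neg, if_pos hm, if_neg hn, mul_zero]
        intro hmn
        exact hn ⟨(Nat.coprime_mul_iff_left.mp hmn.1).2, fun h => hmn.2 (by simp [h])⟩
    · rw [if_neg, if_neg hm, zero_mul]
      intro hmn
      exact hm ⟨(Nat.coprime_mul_iff_left.mp hmn.1).1, fun h => hmn.2 (by simp [h])⟩

/-- If `Q` is a prime with `Q < r`, then `Q` is `r`-mighty. -/
theorem stmt_3 (r : ℝ) (hr : 1 < r) (Q : ℕ) (hQ : Q.Prime) (hQr : (Q : ℝ) < r) :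
    IsMighty r Q := by
  have hQ2 : 2 ≤ Q := hQ.two_le
  have hQR : (2:ℝ) ≤ (Q:ℝ) := by exact_mod_cast hQ2
  have hr2 : (2:ℝ) < r := lt_of_le_of_lt hQR hQr
  set F := mightyF r Q with hFdef
  have hFapp : ∀ n, F n = if Nat.Coprime n (Nat.factorial Q) ∧ n ≠ 0 then (n:ℝ)^(-r) else 0 :=
    fun n => rfl
  have S1 : Summable (fun n : ℕ => (n:ℝ)^(-r)) :=
    Real.summable_nat_rpow.mpr (by linarith)
  have hFnorm : Summable (fun n => ‖F n‖) := by
    apply S1.of_nonneg_of_le (fun n => norm_nonneg _)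
    intro n
    rw [hFapp n, Real.norm_eq_abs]
    split_ifs with h
    · rw [abs_of_nonneg (rpow_nonneg (Nat.cast_nonneg n) _)]
    · simpa using rpow_nonneg (Nat.cast_nonneg n) (-r)
  have SF : Summable (fun n => F n) := hFnorm.of_norm
  -- Euler product
  have heuler : HasProd (fun p : Nat.Primes => (1 - F (p:ℕ))⁻¹) (∑' n, F n) :=
    EulerProduct.eulerProduct_completely_multiplicative_hasProd hFnorm
  have h1 : HasProd (Set.mulIndicator {p : ℕ | p.Prime} (fun n => (1 - F n)⁻¹)) (∑' n, F n) := by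
    rw [← hasProd_subtype_iff_mulIndicator]
    exact heuler
  have hind : Set.mulIndicator {p : ℕ | p.Prime} (fun n => (1 - F n)⁻¹)
      = Set.mulIndicator {q : ℕ | q.Prime ∧ Q < q} (fun n => (1 - (n:ℝ)^(-r))⁻¹) := by
    funext n
    by_cases hp : n.Prime
    · by_cases hQn : Q < n
      · rw [Set.mulIndicator_of_mem (by exact hp), Set.mulIndicator_of_mem (by exact ⟨hp, hQn⟩)]
        have hcop : Nat.Coprime n (Nat.factorial Q) :=
          (Nat.Prime.coprime_iff_not_dvd hp).mpr
            (fun hd => absurd ((Nat.Prime.dvd_factorial hp).mp hd) (by omega))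
        rw [hFapp n, if_pos ⟨hcop, hp.pos.ne'⟩]
      · rw [Set.mulIndicator_of_mem (by exact hp),
          Set.mulIndicator_of_notMem
            (show n ∉ {q : ℕ | q.Prime ∧ Q < q} from fun h => hQn h.2)]
        have hdvd : n ∣ Nat.factorial Q := Nat.dvd_factorial hp.pos (not_lt.mp hQn)
        have hnc : ¬ Nat.Coprime n (Nat.factorial Q) :=
          fun hc => (Nat.Prime.coprime_iff_not_dvd hp).mp hc hdvd
        rw [hFapp n, if_neg (fun hh => hnc hh.1), sub_zero, inv_one]
    · rw [Set.mulIndicator_of_notMem (show n ∉ {p : ℕ | p.Prime} from hp),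
        Set.mulIndicator_of_notMem (show n ∉ {q : ℕ | q.Prime ∧ Q < q} from fun h => hp h.1)]
  rw [hind] at h1
  have h2 : HasProd (fun q : {q : ℕ // q.Prime ∧ Q < q} => (1 - ((q:ℕ):ℝ)^(-r))⁻¹)
      (∑' n, F n) := hasProd_subtype_iff_mulIndicator.mpr h1
  have hprod : mightyProd r Q = ∑' n, F n := h2.tprod_eq
  -- the parity/threshold data
  set M : ℕ := if Q = 2 then 3 else Q + 2 with hMdef
  have hMcase : (Q = 2 ∧ M = 3) ∨ (Q % 2 = 1 ∧ M = Q + 2) := by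
    rcases eq_or_ne Q 2 with h | h
    · exact Or.inl ⟨h, by rw [hMdef, if_pos h]⟩
    · exact Or.inr ⟨Nat.odd_iff.mp (hQ.odd_of_ne_two h), by rw [hMdef, if_neg h]⟩
  have hM3 : 3 ≤ M := by rcases hMcase with ⟨_, h⟩ | ⟨_, h⟩ <;> omega
  have hModd : M % 2 = 1 := by rcases hMcase with ⟨_, h⟩ | ⟨hq, h⟩ <;> omega
  have hMQ : Q < M := by rcases hMcase with ⟨hq, h⟩ | ⟨_, h⟩ <;> omega
  -- the majorant H
  set H : ℕ → ℝ := fun n => if n = 1 then 1 else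
      if n % 2 = 1 ∧ Q < n then (n:ℝ)^(-r) else 0 with hHdef
  have hHnonneg : ∀ n, 0 ≤ H n := by
    intro n
    simp only [hHdef]
    split_ifs
    · norm_num
    · exact rpow_nonneg (Nat.cast_nonneg n) _
    · exact le_refl 0
  have hHle : ∀ n, H n ≤ (n:ℝ)^(-r) := by
    intro n
    simp only [hHdef]
    split_ifs with h1 h2
    · rw [h1]; rw [Nat.cast_one, Real.one_rpow]
    · exact le_refl _
    · exact rpow_nonneg (Nat.cast_nonneg n) _
  have SH : Summable H := S1.of_nonneg_of_le hHnonneg hHle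
  have hFH : ∀ n, F n ≤ H n := by
    intro n
    rw [hFapp n]
    split_ifs with h
    · obtain ⟨hcop, hn0⟩ := h
      rcases eq_or_ne n 1 with rfl | hn1
      · simp only [hHdef, if_pos rfl, Nat.cast_one, Real.one_rpow]
        exact le_refl 1
      · have hcop' : Nat.gcd n (Nat.factorial Q) = 1 := hcop
        have hodd : n % 2 = 1 := by
          by_contra hpar
          have h2n : 2 ∣ n := by omega
          have h2f : 2 ∣ Nat.factorial Q := Nat.dvd_factorial (by norm_num) hQ2
          have h21 := Nat.dvd_gcd h2n h2f
          rw [hcop'] at h21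
          omega
        have hQn : Q < n := by
          by_contra hle
          push_neg at hle
          have hpf := Nat.minFac_prime hn1
          have hdn : n.minFac ∣ n := Nat.minFac_dvd n
          have hfq : n.minFac ∣ Nat.factorial Q :=
            Nat.dvd_factorial hpf.pos (le_trans (Nat.minFac_le (Nat.pos_of_ne_zero hn0)) hle)
          have h31 := Nat.dvd_gcd hdn hfq
          rw [hcop'] at h31
          exact hpf.one_lt.ne' (Nat.dvd_one.mp h31)
        simp only [hHdef]
        rw [if_neg hn1, if_pos ⟨hodd, hQn⟩]
    · exact hHnonneg n
  have hsum1 : ∑' n, F n ≤ ∑' n, H n := Summable.tsum_le_tsum hFH SF SH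
  -- reindex the support of H
  set e : ℕ → ℕ := fun j => if j = 0 then 1 else M + 2 * (j - 1) with hedef
  have he : Function.Injective e := by
    intro a b hab
    simp only [hedef] at hab
    split_ifs at hab <;> omega
  have hsupp : Function.support H ⊆ Set.range e := by
    intro n hn
    simp only [Function.mem_support, hHdef] at hn
    split_ifs at hn with h1 h2
    · exact ⟨0, by simp [hedef, h1]⟩
    · obtain ⟨hodd, hQn⟩ := h2
      refine ⟨(n - M) / 2 + 1, ?_⟩
      simp only [hedef, if_neg (Nat.succ_ne_zero _)]
      rcases hMcase with ⟨hq2, hm⟩ | ⟨hq1, hm⟩ <;> omega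
    · exact absurd rfl hn
  have htsum1 : ∑' j, H (e j) = ∑' n, H n := he.tsum_eq hsupp
  have SHe : Summable (fun j => H (e j)) := SH.comp_injective he
  have htsum2 : ∑' j, H (e j) = H (e 0) + ∑' j, H (e (j + 1)) := Summable.tsum_eq_zero_add SHe
  have he0 : H (e 0) = 1 := by simp [hedef, hHdef]
  have heS : (fun j => H (e (j + 1))) = fun j => ((M + 2 * j : ℕ):ℝ)^(-r) := by
    funext j
    have hej : e (j + 1) = M + 2 * j := by
      simp only [hedef, if_neg (Nat.succ_ne_zero _)]
      omega
    rw [hej]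
    simp only [hHdef]
    rw [if_neg (by omega), if_pos ⟨by omega, by omega⟩]
  have ST : Summable (fun j => ((M + 2 * j : ℕ):ℝ)^(-r)) := by
    have hcomp : (fun j => ((M + 2 * j : ℕ):ℝ)^(-r))
        = (fun n : ℕ => (n:ℝ)^(-r)) ∘ (fun j => M + 2 * j) := rfl
    rw [hcomp]
    exact S1.comp_injective (fun a b hab => by omega)
  have hHT : ∑' n, H n = 1 + ∑' j, ((M + 2 * j : ℕ):ℝ)^(-r) := by
    rw [← htsum1, htsum2, he0, heS]
  -- bound the tail sum
  have hTbound : ∑' j, ((M + 2 * j : ℕ):ℝ)^(-r) < (Q:ℝ)^(-r) := by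
    rcases hMcase with ⟨hq2, hm⟩ | ⟨hq1, hm⟩
    · have hle : ∑' j, ((M + 2 * j : ℕ):ℝ)^(-r) ≤ 9 / 4 * (3:ℝ)^(-r) := by
        apply Summable.tsum_le_of_sum_le ST
        intro s
        have := mighty_sum2 hr2.le s
        simpa only [hm] using this
      have hfin := mighty_final2 hr2
      have : ((Q:ℕ):ℝ) = (2:ℝ) := by rw [hq2]; norm_num
      rw [this]
      linarith
    · have hQ3 : 3 ≤ Q := by omega
      have hle : ∑' j, ((M + 2 * j : ℕ):ℝ)^(-r) ≤ (r - 1)⁻¹ * ((Q + 1 : ℕ):ℝ)^(1 - r) := by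
        apply Summable.tsum_le_of_sum_le ST
        intro s
        have h3 := mighty_sum3 hr2.le (K := Q + 1) (by omega) s
        have hcongr : ∀ j : ℕ, (Q + 1 + 1 + 2 * j) = (M + 2 * j) := fun j => by omega
        simp only [hcongr] at h3
        exact h3
      have hfin : (r - 1)⁻¹ * ((Q:ℝ) + 1)^(1 - r) < (Q:ℝ)^(-r) :=
        mighty_final3 (by exact_mod_cast hQ3) hQr
      have hcast : ((Q + 1 : ℕ):ℝ) = (Q:ℝ) + 1 := by push_cast; ring
      rw [hcast] at hle
      linarith
  -- conclude
  have hfinal : mightyProd r Q < 1 + (Q:ℝ)^(-r) := by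
    rw [hprod]
    calc ∑' n, F n ≤ ∑' n, H n := hsum1
      _ = 1 + ∑' j, ((M + 2 * j : ℕ):ℝ)^(-r) := hHT
      _ < 1 + (Q:ℝ)^(-r) := by linarith
  exact hfinal
end

section
/- Let r > 1 be a real number, let m be a positive integer, let Q = p_m be the m-th prime, and set S := S_{1,m}(r) = ∑_{t=m+1}^∞ p_t^{−r}. Assume S < 1. If S − S²/2 > 1/(Q^r + 1), then Q is not r-mighty. -/
open scoped BigOperators

/-- `S_{1,m}(r) = ∑_{q prime, q > p} q^{-r}`, the sum over all primes greater than `p = p_m`. -/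
noncomputable def S1 (r : ℝ) (p : ℕ) : ℝ :=
  ∑' q : {q : ℕ // q.Prime ∧ p < q}, ((q : ℕ) : ℝ) ^ (-r)

set_option maxHeartbeats 1000000

/-- Let `Q = p_m` be prime and `S = S_{1,m}(r) < 1`. If `S - S²/2 > 1/(Q^r + 1)` then `Q`
is not `r`-mighty. -/
theorem stmt_5 (r : ℝ) (hr : 1 < r) (m : ℕ) (hm : 0 < m) (Q : ℕ)
    (hQ : Q = Nat.nth Nat.Prime (m - 1)) (S : ℝ) (hS : S = S1 r Q) (hS1 : S < 1)
    (h : S - S ^ 2 / 2 > 1 / ((Q : ℝ) ^ r + 1)) :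
    ¬ IsMighty r Q := by
  have hQp : Q.Prime := hQ ▸ Nat.prime_nth_prime _
  have hQ2 : 2 ≤ Q := hQp.two_le
  set ι := {q : ℕ // q.Prime ∧ Q < q}
  set x : ι → ℝ := fun q => ((q : ℕ) : ℝ) ^ (-r) with hxdef
  have hq1 : ∀ q : ι, (1 : ℝ) < (q : ℕ) := by
    intro q
    exact_mod_cast lt_of_le_of_lt (by norm_num) (lt_of_le_of_lt hQ2 q.2.2)
  have hx0 : ∀ q : ι, 0 < x q := fun q =>
    Real.rpow_pos_of_pos (by linarith [hq1 q]) _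
  have hxhalf : ∀ q : ι, x q ≤ 1 / 2 := by
    intro q
    have h1 : x q ≤ ((q : ℕ) : ℝ) ^ (-1 : ℝ) :=
      Real.rpow_le_rpow_of_exponent_le (le_of_lt (hq1 q)) (by linarith)
    have h2 : ((q : ℕ) : ℝ) ^ (-1 : ℝ) = (((q : ℕ) : ℝ))⁻¹ := Real.rpow_neg_one _
    have h3 : (((q : ℕ) : ℝ))⁻¹ ≤ 1 / 2 := by
      rw [one_div]
      apply inv_anti₀ (by norm_num)
      have : (2 : ℕ) ≤ (q : ℕ) := le_of_lt (lt_of_le_of_lt hQ2 q.2.2)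
      exact_mod_cast this
    linarith [h1, h2 ▸ h1]
  have hx1 : ∀ q : ι, x q < 1 := fun q => lt_of_le_of_lt (hxhalf q) (by norm_num)
  -- summability of x
  have hsum : Summable x := by
    have hps : Summable (fun p : Nat.Primes => (p : ℝ) ^ (-r)) :=
      Nat.Primes.summable_rpow.mpr (by linarith)
    have hinj : Function.Injective (fun q : ι => (⟨q.1, q.2.1⟩ : Nat.Primes)) := by
      intro a b hab
      exact Subtype.ext (congrArg (Subtype.val : Nat.Primes → ℕ) hab)
    exact (hps.comp_injective hinj).congr (fun q => by norm_cast)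
  -- summability of the logs
  have hlog_nonneg : ∀ q : ι, 0 ≤ Real.log ((1 - x q)⁻¹) := by
    intro q
    apply Real.log_nonneg
    rw [le_inv_comm₀ (by norm_num) (by linarith [hx1 q])]
    linarith [hx0 q]
  have hxle : ∀ q : ι, x q ≤ Real.log ((1 - x q)⁻¹) := by
    intro q
    have hpos : (0 : ℝ) < 1 - x q := by linarith [hx1 q]
    have := Real.log_le_sub_one_of_pos hpos
    rw [Real.log_inv]
    linarith
  have hlogle : ∀ q : ι, Real.log ((1 - x q)⁻¹) ≤ 2 * x q := by
    intro q
    have hpos : (0 : ℝ) < 1 - x q := by linarith [hx1 q]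
    have h1 : Real.log ((1 - x q)⁻¹) ≤ (1 - x q)⁻¹ - 1 :=
      Real.log_le_sub_one_of_pos (by positivity)
    have h2 : (1 - x q)⁻¹ ≤ 1 + 2 * x q := by
      rw [inv_le_iff_one_le_mul₀ hpos]
      nlinarith [hx0 q, hxhalf q]
    linarith
  have hlogsum : Summable (fun q : ι => Real.log ((1 - x q)⁻¹)) :=
    Summable.of_nonneg_of_le hlog_nonneg hlogle (hsum.mul_left 2)
  -- the product equals exp of the sum of logs
  set T : ℝ := ∑' q : ι, Real.log ((1 - x q)⁻¹) with hT
  have hprod : HasProd (fun q : ι => (1 - x q)⁻¹) (Real.exp T) := by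
    have h0 := hlogsum.hasSum.rexp
    rwa [show (Real.exp ∘ fun q : ι => Real.log ((1 - x q)⁻¹)) = fun q => (1 - x q)⁻¹ from
      funext fun q => Real.exp_log (inv_pos.mpr (by linarith [hx1 q]))] at h0
  have hmp : mightyProd r Q = Real.exp T := hprod.tprod_eq
  -- S ≤ T
  have hST : S ≤ T := by
    rw [hS, S1, hT]
    exact Summable.tsum_le_tsum hxle hsum hlogsum
  -- the numeric part
  set Y : ℝ := (Q : ℝ) ^ r with hY
  have hYpos : 0 < Y := Real.rpow_pos_of_pos (by positivity) _
  have hQinv : ((Q : ℝ)) ^ (-r) = Y⁻¹ := by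
    rw [hY, Real.rpow_neg (by positivity)]
  have hSpos : 0 < S - S ^ 2 / 2 := lt_trans (by positivity) h
  have hS0 : 0 < S := by nlinarith
  -- exp (-S) ≤ 1 - S + S^2/2
  have hexp3 : 1 + S + S ^ 2 / 2 ≤ Real.exp S := by
    have := Real.sum_le_exp_of_nonneg (le_of_lt hS0) 3
    simp [Finset.sum_range_succ] at this
    nlinarith [this]
  have hexpneg : Real.exp (-S) ≤ 1 - S + S ^ 2 / 2 := by
    rw [Real.exp_neg]
    rw [inv_le_iff_one_le_mul₀ (Real.exp_pos S)]
    nlinarith [hexp3, Real.exp_pos S]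
  -- 1 + Y⁻¹ ≤ exp S
  have hkey : 1 + Y⁻¹ ≤ Real.exp S := by
    have h1 : 1 < (S - S ^ 2 / 2) * (Y + 1) := by
      have := (div_lt_iff₀ (show (0:ℝ) < Y + 1 by positivity)).mp h
      linarith
    have h2 : (1 - S + S ^ 2 / 2) * (Y + 1) < Y := by nlinarith
    have h3 : (1 + Y⁻¹) * Real.exp (-S) ≤ 1 := by
      have h4 : (1 + Y⁻¹) * (1 - S + S ^ 2 / 2) ≤ 1 := by
        rw [← mul_le_mul_iff_of_pos_right hYpos]
        have : (1 + Y⁻¹) * Y = Y + 1 := by field_simp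
        nlinarith [h2]
      have h5 : 0 ≤ 1 + Y⁻¹ := by positivity
      have h6 : 0 ≤ Real.exp (-S) := le_of_lt (Real.exp_pos _)
      nlinarith [mul_le_mul_of_nonneg_left hexpneg h5]
    have hme : Real.exp (-S) * Real.exp S = 1 := by
      rw [← Real.exp_add]; simp
    nlinarith [h3, hme, Real.exp_pos S, Real.exp_pos (-S), inv_nonneg.mpr (le_of_lt hYpos)]
  -- conclusion
  intro hmight
  rw [IsMighty, hmp, hQinv] at hmight
  have : Real.exp S ≤ Real.exp T := Real.exp_le_exp.mpr hST
  linarith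
end

section
/- Let r > 1 be a real number, let m be a positive integer, let Q = p_m be the m-th prime, and set S := S_{1,m}(r) = ∑_{t=m+1}^∞ p_t^{−r}. Assume S < 1. If S < 1/(Q^r + 1), then Q is r-mighty. -/
open scoped BigOperators

/-- Weierstrass product inequality. -/
lemma weier {ι : Type*} (x : ι → ℝ) (hx0 : ∀ i, 0 ≤ x i) (hx1 : ∀ i, x i ≤ 1)
    (F : Finset ι) : 1 - ∑ i ∈ F, x i ≤ ∏ i ∈ F, (1 - x i) := by
  classical
  induction F using Finset.induction with
  | empty => simp
  | @insert a s hnot ih =>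
    rw [Finset.sum_insert hnot, Finset.prod_insert hnot]
    have h1 : 0 ≤ 1 - x a := by linarith [hx1 a]
    have h2 : 0 ≤ ∑ i ∈ s, x i := Finset.sum_nonneg fun i _ => hx0 i
    nlinarith [hx0 a]

/-- Let `Q = p_m` be prime and `S = S_{1,m}(r) < 1`. If `S < 1/(Q^r + 1)` then `Q` is
`r`-mighty. -/
theorem stmt_6 (r : ℝ) (hr : 1 < r) (m : ℕ) (hm : 0 < m) (Q : ℕ)
    (hQ : Q = Nat.nth Nat.Prime (m - 1)) (S : ℝ) (hS : S = S1 r Q) (hS1 : S < 1)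
    (h : S < 1 / ((Q : ℝ) ^ r + 1)) :
    IsMighty r Q := by
  have hQp : Q.Prime := hQ ▸ Nat.prime_nth_prime _
  have hQ2 : (2 : ℝ) ≤ (Q : ℝ) := by exact_mod_cast hQp.two_le
  have hQr : 1 < (Q : ℝ) ^ r := Real.one_lt_rpow_iff_of_pos (by linarith) |>.2
    (Or.inl ⟨by linarith, by linarith⟩)
  have hxQ : ((Q : ℝ)) ^ (-r) = ((Q : ℝ) ^ r)⁻¹ := by
    rw [Real.rpow_neg (by linarith)]
  have hxQpos : 0 < (Q : ℝ) ^ (-r) := Real.rpow_pos_of_pos (by linarith) _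
  -- the key bound: (1 - S)⁻¹ < 1 + Q^{-r}
  have hpos : 0 < (Q : ℝ) ^ r + 1 := by linarith
  have hkey : (1 - S)⁻¹ < 1 + (Q : ℝ) ^ (-r) := by
    rw [hxQ]
    rw [div_eq_inv_mul, mul_one] at h
    have h1S : 1 - ((Q : ℝ) ^ r + 1)⁻¹ < 1 - S := by linarith
    have h2 : (0 : ℝ) < 1 - ((Q : ℝ) ^ r + 1)⁻¹ := by
      have : ((Q : ℝ) ^ r + 1)⁻¹ < 1 := by
        rw [inv_lt_one_iff₀]; right; linarith
      linarith
    have h3 : (1 - S)⁻¹ < (1 - ((Q : ℝ) ^ r + 1)⁻¹)⁻¹ :=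
      inv_strictAnti₀ h2 h1S
    refine h3.trans_le (le_of_eq ?_)
    have hQrpos : (0 : ℝ) < (Q : ℝ) ^ r := by linarith
    field_simp
    rw [add_sub_cancel_right, div_self hQrpos.ne']
  set ι := {q : ℕ // q.Prime ∧ Q < q}
  set x : ι → ℝ := fun q => ((q : ℕ) : ℝ) ^ (-r) with hxdef
  have hx0 : ∀ q : ι, 0 < x q := fun q =>
    Real.rpow_pos_of_pos (by exact_mod_cast q.2.1.pos) _
  have hx1 : ∀ q : ι, x q < 1 := fun q =>
    Real.rpow_lt_one_of_one_lt_of_neg (by exact_mod_cast q.2.1.one_lt) (by linarith)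
  have hsum : Summable x := by
    have : Summable fun n : ℕ => ((n : ℝ)) ^ (-r) :=
      Real.summable_nat_rpow.2 (by linarith)
    exact this.comp_injective Subtype.coe_injective
  have hFS : ∀ F : Finset ι, ∑ i ∈ F, x i ≤ S := fun F => by
    rw [hS]; exact Summable.sum_le_tsum F (fun i _ => (hx0 i).le) hsum
  have h1S : 0 < 1 - S := by linarith
  have hS0 : 0 ≤ S := by
    rw [hS]
    exact tsum_nonneg fun i => (Real.rpow_pos_of_pos (by exact_mod_cast i.2.1.pos) _).le
  have hbound : ∀ F : Finset ι, ∏ i ∈ F, (1 - x i)⁻¹ ≤ (1 - S)⁻¹ := by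
    intro F
    rw [Finset.prod_inv_distrib]
    have hW : 1 - S ≤ ∏ i ∈ F, (1 - x i) := by
      refine le_trans (by linarith [hFS F]) (weier x (fun i => (hx0 i).le)
        (fun i => (hx1 i).le) F)
    exact inv_anti₀ h1S hW
  have hgoal : mightyProd r Q ≤ (1 - S)⁻¹ := by
    by_cases hM : Multipliable fun q : ι => (1 - x q)⁻¹
    · exact le_of_tendsto' hM.hasProd hbound
    · rw [mightyProd, tprod_eq_one_of_not_multipliable hM]
      have h' := inv_anti₀ h1S (by linarith : 1 - S ≤ 1)
      simpa using h'
  exact lt_of_le_of_lt hgoal hkey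
end

section
/- For every prime p there exists a real number r_p > 1 such that for every real s > 1, p is s-mighty if and only if s > r_p. In particular, if p is r-mighty and s > r > 1, then p is s-mighty, and every prime p is s-mighty for all sufficiently large s. -/
open scoped BigOperators

open Real Set Filter

-- basic bounds
lemma aux_rpow_le_half {n : ℕ} (hn : 2 ≤ n) {s : ℝ} (hs : 1 ≤ s) :
    (n : ℝ) ^ (-s) ≤ 1/2 := by
  have h1 : (n:ℝ) ^ (-s) ≤ (n:ℝ) ^ (-1 : ℝ) :=
    Real.rpow_le_rpow_of_exponent_le (by exact_mod_cast hn.trans' one_le_two) (by linarith)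
  have h2 : (n:ℝ) ^ (-1:ℝ) = ((n:ℝ))⁻¹ := Real.rpow_neg_one _
  have h3 : ((n:ℝ))⁻¹ ≤ 1/2 := by
    rw [one_div]
    exact inv_anti₀ (by norm_num) (by exact_mod_cast hn)
  linarith

lemma aux_rpow_pos {n : ℕ} (hn : 2 ≤ n) (s : ℝ) : 0 < (n : ℝ) ^ (-s) :=
  Real.rpow_pos_of_pos (by positivity) _

lemma aux_neg_log_le {x : ℝ} (hx0 : 0 ≤ x) (hx : x ≤ 1/2) : -Real.log (1 - x) ≤ 2 * x := by
  have h1 : (0:ℝ) < 1 - x := by linarith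
  have h2 : Real.log (1 - x)⁻¹ ≤ (1 - x)⁻¹ - 1 := Real.log_le_sub_one_of_pos (by positivity)
  rw [Real.log_inv] at h2
  have h3 : (1 - x)⁻¹ - 1 = x / (1 - x) := by field_simp; ring
  have h4 : x / (1 - x) ≤ 2 * x := by
    rw [div_le_iff₀ h1]; nlinarith
  linarith

lemma aux_le_neg_log {x : ℝ} (hx0 : 0 ≤ x) (hx : x ≤ 1/2) : x ≤ -Real.log (1 - x) := by
  have h1 : (0:ℝ) < 1 - x := by linarith
  have := Real.log_le_sub_one_of_pos h1
  linarith

lemma aux_log_one_add_le {x : ℝ} (hx0 : 0 ≤ x) : Real.log (1 + x) ≤ x := by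
  have := Real.log_le_sub_one_of_pos (show (0:ℝ) < 1 + x by linarith)
  linarith

lemma aux_le_log_one_add {x : ℝ} (hx0 : 0 ≤ x) (hx : x ≤ 1) : x / 2 ≤ Real.log (1 + x) := by
  have h1 : (0:ℝ) < 1 + x := by linarith
  have h2 := Real.log_le_sub_one_of_pos (show (0:ℝ) < (1 + x)⁻¹ by positivity)
  rw [Real.log_inv] at h2
  have h3 : (1 + x)⁻¹ - 1 = -(x / (1 + x)) := by field_simp; ring
  have h4 : x / 2 ≤ x / (1 + x) := by
    apply div_le_div_of_nonneg_left hx0 h1 (by linarith)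
  linarith

/-- the index type -/
abbrev MIdx (p : ℕ) := {q : ℕ // q.Prime ∧ p < q}

lemma midx_two_le {p : ℕ} (q : MIdx p) : 2 ≤ (q : ℕ) := q.2.1.two_le

noncomputable def PT (p : ℕ) (s : ℝ) : ℝ :=
  ∑' q : MIdx p, -Real.log (1 - ((q : ℕ) : ℝ) ^ (-s))

lemma summable_x {p : ℕ} {s : ℝ} (hs : 1 < s) :
    Summable (fun q : MIdx p => ((q : ℕ) : ℝ) ^ (-s)) := by
  have h : Summable (fun n : ℕ => (n : ℝ) ^ (-s)) :=
    Real.summable_nat_rpow.mpr (by linarith)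
  exact h.comp_injective Subtype.val_injective

lemma summable_log {p : ℕ} {s : ℝ} (hs : 1 < s) :
    Summable (fun q : MIdx p => -Real.log (1 - ((q : ℕ) : ℝ) ^ (-s))) := by
  refine Summable.of_nonneg_of_le (fun q => ?_) (fun q => ?_) ((summable_x hs).mul_left 2)
  · have := aux_le_neg_log (aux_rpow_pos (midx_two_le q) s).le
      (aux_rpow_le_half (midx_two_le q) hs.le)
    have := (aux_rpow_pos (midx_two_le q) s).le
    linarith
  · exact aux_neg_log_le (aux_rpow_pos (midx_two_le q) s).le
      (aux_rpow_le_half (midx_two_le q) hs.le)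

lemma mightyProd_eq_exp {p : ℕ} {s : ℝ} (hs : 1 < s) :
    mightyProd s p = Real.exp (PT p s) := by
  have key := Real.rexp_tsum_eq_tprod (ι := MIdx p)
    (f := fun q => (1 - ((q : ℕ) : ℝ) ^ (-s))⁻¹)
    (fun q => by
      have h1 := aux_rpow_le_half (midx_two_le q) hs.le
      have : (0:ℝ) < 1 - ((q : ℕ) : ℝ) ^ (-s) := by linarith
      positivity)
    (by
      have : (fun q : MIdx p => Real.log (1 - ((q : ℕ) : ℝ) ^ (-s))⁻¹)
          = fun q : MIdx p => -Real.log (1 - ((q : ℕ) : ℝ) ^ (-s)) := by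
        funext q; rw [Real.log_inv]
      rw [this]
      exact summable_log hs)
  have := key
  rw [mightyProd, ← this]
  unfold PT
  congr 1
  exact tsum_congr fun q => Real.log_inv _

noncomputable def Psi (p : ℕ) (s : ℝ) : ℝ :=
  (p : ℝ) ^ s * PT p s - (p : ℝ) ^ s * Real.log (1 + (p : ℝ) ^ (-s))

lemma isMighty_iff_PT {p : ℕ} (hp : p.Prime) {s : ℝ} (hs : 1 < s) :
    IsMighty s p ↔ PT p s < Real.log (1 + (p : ℝ) ^ (-s)) := by
  have hpos : (0:ℝ) < 1 + (p : ℝ) ^ (-s) := by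
    have := aux_rpow_pos hp.two_le s; linarith
  rw [IsMighty, mightyProd_eq_exp hs, gt_iff_lt, ← Real.lt_log_iff_exp_lt hpos]

lemma isMighty_iff_Psi {p : ℕ} (hp : p.Prime) {s : ℝ} (hs : 1 < s) :
    IsMighty s p ↔ Psi p s < 0 := by
  have hp0 : (0:ℝ) < (p : ℝ) ^ s := Real.rpow_pos_of_pos (by exact_mod_cast hp.pos) _
  rw [isMighty_iff_PT hp hs, Psi, sub_neg, mul_lt_mul_iff_right₀ hp0]

-- aux : (a^(-u))^m = (a^m : ℝ)^(-u)
lemma aux_rpow_npow {a : ℝ} (ha : 0 ≤ a) (u : ℝ) (m : ℕ) :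
    (a ^ (-u)) ^ m = (a ^ m) ^ (-u) := by
  rw [← Real.rpow_natCast (a ^ (-u)) m, ← Real.rpow_natCast a m,
    ← Real.rpow_mul ha, ← Real.rpow_mul ha, mul_comm]

lemma term_hasSum {p : ℕ} (hp : p.Prime) (q : MIdx p) {u : ℝ} (hu : 1 ≤ u) :
    HasSum (fun n : ℕ => (((p:ℝ) / ((q:ℕ):ℝ) ^ (n+1)) ^ u) / (n+1))
      ((p : ℝ) ^ u * (-Real.log (1 - ((q:ℕ):ℝ) ^ (-u)))) := by
  have h2q : 2 ≤ (q:ℕ) := midx_two_le q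
  have hxpos := aux_rpow_pos h2q u
  have hxle := aux_rpow_le_half h2q hu
  have habs : |((q:ℕ):ℝ) ^ (-u)| < 1 := by rw [abs_of_pos hxpos]; linarith
  have h := (hasSum_pow_div_log_of_abs_lt_one habs).mul_left ((p:ℝ) ^ u)
  refine h.congr_fun fun n => ?_
  have hq0 : (0:ℝ) ≤ ((q:ℕ):ℝ) := by positivity
  have hQpos : (0:ℝ) < ((q:ℕ):ℝ) ^ (n+1) := by positivity
  have e1 : ((((q:ℕ):ℝ)) ^ (-u)) ^ (n+1) = (((q:ℕ):ℝ) ^ (n+1)) ^ (-u) :=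
    aux_rpow_npow hq0 u (n+1)
  have e2 : ((p:ℝ) / ((q:ℕ):ℝ) ^ (n+1)) ^ u = (p:ℝ) ^ u / (((q:ℕ):ℝ) ^ (n+1)) ^ u :=
    Real.div_rpow (by positivity) hQpos.le u
  have e3 : (((q:ℕ):ℝ) ^ (n+1)) ^ (-u) = ((((q:ℕ):ℝ) ^ (n+1)) ^ u)⁻¹ :=
    Real.rpow_neg hQpos.le u
  rw [e2, e1, e3]
  ring


lemma term_anti {p : ℕ} (hp : p.Prime) (q : MIdx p) {s t : ℝ} (hs : 1 ≤ s) (hst : s < t) :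
    (p : ℝ) ^ t * (-Real.log (1 - ((q:ℕ):ℝ) ^ (-t)))
      < (p : ℝ) ^ s * (-Real.log (1 - ((q:ℕ):ℝ) ^ (-s))) := by
  have hb : ∀ n : ℕ, 0 < (p:ℝ) / ((q:ℕ):ℝ) ^ (n+1) ∧ (p:ℝ) / ((q:ℕ):ℝ) ^ (n+1) < 1 := by
    intro n
    have hq2 : 2 ≤ (q:ℕ) := midx_two_le q
    have hQpos : (0:ℝ) < ((q:ℕ):ℝ) ^ (n+1) := by positivity
    constructor
    · have : (0:ℝ) < (p:ℝ) := by exact_mod_cast hp.pos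
      positivity
    · rw [div_lt_one hQpos]
      calc (p:ℝ) < ((q:ℕ):ℝ) := by exact_mod_cast q.2.2
        _ ≤ ((q:ℕ):ℝ) ^ (n+1) := le_self_pow₀ (by exact_mod_cast hq2.trans' one_le_two) (by omega)
  refine hasSum_lt (f := fun n : ℕ => (((p:ℝ) / ((q:ℕ):ℝ) ^ (n+1)) ^ t) / (n+1))
    (g := fun n : ℕ => (((p:ℝ) / ((q:ℕ):ℝ) ^ (n+1)) ^ s) / (n+1))
    (i := 0) (fun n => ?_) ?_ (term_hasSum hp q (by linarith)) (term_hasSum hp q hs)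
  · have := (hb n).1
    have h1 : (((p:ℝ) / ((q:ℕ):ℝ) ^ (n+1)) ^ t) ≤ (((p:ℝ) / ((q:ℕ):ℝ) ^ (n+1)) ^ s) :=
      Real.rpow_le_rpow_of_exponent_ge (hb n).1 (hb n).2.le hst.le
    have hn1 : (0:ℝ) < (n:ℝ) + 1 := by positivity
    exact div_le_div_of_nonneg_right h1 hn1.le
  · have h1 : (((p:ℝ) / ((q:ℕ):ℝ) ^ (0+1)) ^ t) < (((p:ℝ) / ((q:ℕ):ℝ) ^ (0+1)) ^ s) :=
      Real.rpow_lt_rpow_of_exponent_gt (hb 0).1 (hb 0).2 hst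
    simpa using div_lt_div_of_pos_right h1 (by norm_num : (0:ℝ) < (0:ℕ) + 1)

lemma summable_term {p : ℕ} {u : ℝ} (hu : 1 < u) :
    Summable (fun q : MIdx p => (p : ℝ) ^ u * (-Real.log (1 - ((q:ℕ):ℝ) ^ (-u)))) :=
  (summable_log hu).mul_left _

lemma P1_eq {p : ℕ} {u : ℝ} :
    (∑' q : MIdx p, (p : ℝ) ^ u * (-Real.log (1 - ((q:ℕ):ℝ) ^ (-u))))
      = (p : ℝ) ^ u * PT p u := by
  rw [PT, tsum_mul_left]

lemma P1_anti {p : ℕ} (hp : p.Prime) {s t : ℝ} (hs : 1 < s) (hst : s < t) :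
    (p : ℝ) ^ t * PT p t < (p : ℝ) ^ s * PT p s := by
  rw [← P1_eq, ← P1_eq]
  obtain ⟨q0, hq0le, hq0p⟩ := Nat.exists_infinite_primes (p + 1)
  exact Summable.tsum_lt_tsum (i := ⟨q0, hq0p, by omega⟩)
    (fun q => (term_anti hp q hs.le hst).le)
    (term_anti hp _ hs.le hst) (summable_term (hs.trans hst)) (summable_term hs)

lemma P2_mono {p : ℕ} (hp : p.Prime) {s t : ℝ} (hs : 1 < s) (hst : s < t) :
    (p : ℝ) ^ s * Real.log (1 + (p : ℝ) ^ (-s)) < (p : ℝ) ^ t * Real.log (1 + (p : ℝ) ^ (-t)) := by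
  set x := (p : ℝ) ^ (-s) with hxdef
  set y := (p : ℝ) ^ (-t) with hydef
  have hp1 : (1:ℝ) ≤ (p:ℝ) := by exact_mod_cast hp.one_lt.le
  have hy0 : 0 < y := aux_rpow_pos hp.two_le t
  have hyx : y < x := Real.rpow_lt_rpow_of_exponent_lt (by exact_mod_cast hp.one_lt) (by linarith)
  have hx0 : 0 < x := lt_trans hy0 hyx
  -- key : log(1+x)/x < log(1+y)/y
  have hkey : Real.log (1 + x) / x < Real.log (1 + y) / y := by
    have hq : 1 < x / y := (one_lt_div hy0).mpr hyx
    have h := one_add_mul_self_lt_rpow_one_add (show (-1:ℝ) ≤ y by linarith) (ne_of_gt hy0) hq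
    rw [div_mul_cancel₀ _ (ne_of_gt hy0)] at h
    have hlog : Real.log (1 + x) < (x / y) * Real.log (1 + y) := by
      calc Real.log (1 + x) < Real.log ((1 + y) ^ (x / y)) :=
            Real.log_lt_log (by linarith) h
        _ = (x / y) * Real.log (1 + y) := Real.log_rpow (by linarith) _
    rw [div_lt_div_iff₀ hx0 hy0]
    calc Real.log (1 + x) * y < (x / y) * Real.log (1 + y) * y := by
          apply mul_lt_mul_of_pos_right hlog hy0
      _ = Real.log (1 + y) * x := by field_simp
  have hxs : (p : ℝ) ^ s = x⁻¹ := by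
    rw [hxdef, ← Real.rpow_neg (by linarith), neg_neg]
  have hyt : (p : ℝ) ^ t = y⁻¹ := by
    rw [hydef, ← Real.rpow_neg (by linarith), neg_neg]
  rw [hxs, hyt]
  rw [inv_mul_eq_div, inv_mul_eq_div] at *
  exact hkey

lemma Psi_strictAntiOn {p : ℕ} (hp : p.Prime) : StrictAntiOn (Psi p) (Set.Ioi 1) := by
  intro s hs t ht hst
  have h1 := P1_anti hp hs hst
  have h2 := P2_mono hp hs hst
  unfold Psi
  linarith

lemma cont_const_rpow {a : ℝ} (ha : 0 < a) : Continuous fun s : ℝ => a ^ s := by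
  have : (fun s : ℝ => a ^ s) = fun s : ℝ => Real.exp (Real.log a * s) := by
    funext s; rw [Real.rpow_def_of_pos ha]
  rw [this]
  exact Real.continuous_exp.comp (continuous_const.mul continuous_id)

lemma cont_const_rpow_neg {a : ℝ} (ha : 0 < a) : Continuous fun s : ℝ => a ^ (-s) :=
  (cont_const_rpow ha).comp continuous_neg

lemma PT_continuousAt {p : ℕ} {s₀ : ℝ} (hs₀ : 1 < s₀) : ContinuousAt (PT p) s₀ := by
  set s₁ := (1 + s₀) / 2 with hs₁def
  have hs₁1 : 1 < s₁ := by rw [hs₁def]; linarith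
  have hs₁s₀ : s₁ < s₀ := by rw [hs₁def]; linarith
  have hK : Set.Icc s₁ (s₀ + 1) ∈ nhds s₀ := Icc_mem_nhds hs₁s₀ (by linarith)
  have hcont : ContinuousOn (fun s => ∑' q : MIdx p, -Real.log (1 - ((q:ℕ):ℝ) ^ (-s)))
      (Set.Icc s₁ (s₀ + 1)) := by
    apply continuousOn_tsum (u := fun q : MIdx p => 2 * ((q:ℕ):ℝ) ^ (-s₁))
    · intro q
      intro s hs
      apply ContinuousAt.continuousWithinAt
      have hq2 := midx_two_le q
      have hq0 : (0:ℝ) < ((q:ℕ):ℝ) := by positivity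
      have harg : ContinuousAt (fun s : ℝ => 1 - ((q:ℕ):ℝ) ^ (-s)) s :=
        (continuous_const.sub (cont_const_rpow_neg hq0)).continuousAt
      have hxh := aux_rpow_le_half hq2 (by linarith [hs.1] : 1 ≤ s)
      have hne : 1 - ((q:ℕ):ℝ) ^ (-s) ≠ 0 := by
        have := aux_rpow_pos hq2 s
        intro h; rw [sub_eq_zero] at h; linarith
      exact (harg.log hne).neg
    · exact (summable_x hs₁1).mul_left 2
    · intro q s hs
      have hq2 := midx_two_le q
      have hx0 := aux_rpow_pos hq2 s
      have hxh := aux_rpow_le_half hq2 (by linarith [hs.1] : 1 ≤ s)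
      have hnn : 0 ≤ -Real.log (1 - ((q:ℕ):ℝ) ^ (-s)) := by
        have := aux_le_neg_log hx0.le hxh; linarith
      rw [Real.norm_eq_abs, abs_of_nonneg hnn]
      calc -Real.log (1 - ((q:ℕ):ℝ) ^ (-s)) ≤ 2 * ((q:ℕ):ℝ) ^ (-s) :=
            aux_neg_log_le hx0.le hxh
        _ ≤ 2 * ((q:ℕ):ℝ) ^ (-s₁) := by
            have : ((q:ℕ):ℝ) ^ (-s) ≤ ((q:ℕ):ℝ) ^ (-s₁) :=
              Real.rpow_le_rpow_of_exponent_le (by exact_mod_cast hq2.trans' one_le_two)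
                (by linarith [hs.1])
            linarith
  exact hcont.continuousAt hK

lemma Psi_continuousAt {p : ℕ} (hp : p.Prime) {s₀ : ℝ} (hs₀ : 1 < s₀) :
    ContinuousAt (Psi p) s₀ := by
  have hp0 : (0:ℝ) < (p:ℝ) := by exact_mod_cast hp.pos
  have h1 : ContinuousAt (fun s => (p:ℝ) ^ s) s₀ := (cont_const_rpow hp0).continuousAt
  have h2 : ContinuousAt (fun s => Real.log (1 + (p:ℝ) ^ (-s))) s₀ := by
    have harg : ContinuousAt (fun s : ℝ => 1 + (p:ℝ) ^ (-s)) s₀ :=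
      (continuous_const.add (cont_const_rpow_neg hp0)).continuousAt
    have hne : 1 + (p:ℝ) ^ (-s₀) ≠ 0 := by
      have := aux_rpow_pos hp.two_le s₀; positivity
    exact harg.log hne
  exact ((h1.mul (PT_continuousAt hs₀)).sub (h1.mul h2))

lemma not_summable_inv_midx (p : ℕ) : ¬ Summable (fun q : MIdx p => 1 / ((q:ℕ):ℝ)) := by
  intro h
  set S : Set ℕ := {q | q.Prime ∧ p < q} with hS
  have hind : Summable (S.indicator fun n : ℕ => 1 / (n:ℝ)) :=
    summable_subtype_iff_indicator.mp h
  set T : Set ℕ := {q | q.Prime ∧ q ≤ p} with hT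
  have hTfin : T.Finite := Set.Finite.subset (Set.finite_Iic p) (fun q hq => hq.2)
  have hTsum : Summable (T.indicator fun n : ℕ => 1 / (n:ℝ)) := by
    apply summable_of_finite_support
    apply Set.Finite.subset hTfin
    exact Set.support_indicator_subset
  have hunion : {n : ℕ | n.Prime} = S ∪ T := by
    ext n; simp only [Set.mem_setOf_eq, Set.mem_union, hS, hT]
    constructor
    · intro hn; rcases lt_or_ge p n with h | h
      · exact Or.inl ⟨hn, h⟩
      · exact Or.inr ⟨hn, h⟩
    · rintro (⟨hn, _⟩ | ⟨hn, _⟩) <;> exact hn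
  have hdisj : Disjoint S T := by
    rw [Set.disjoint_left]; rintro q ⟨_, h1⟩ ⟨_, h2⟩; omega
  have : Summable ({n : ℕ | n.Prime}.indicator fun n : ℕ => 1 / (n:ℝ)) := by
    rw [hunion, Set.indicator_union_of_disjoint hdisj]
    exact hind.add hTsum
  exact not_summable_one_div_on_primes this

lemma exists_psi_pos {p : ℕ} (hp : p.Prime) : ∃ a : ℝ, 1 < a ∧ 0 < Psi p a := by
  -- find a finite set with reciprocal sum > 2
  have hF : ∃ F : Finset (MIdx p), 2 < ∑ q ∈ F, 1 / ((q:ℕ):ℝ) := by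
    by_contra hcon
    push_neg at hcon
    exact not_summable_inv_midx p
      (summable_of_sum_le (fun q => by positivity) hcon)
  obtain ⟨F, hF2⟩ := hF
  set g : ℝ → ℝ := fun s => ∑ q ∈ F, ((q:ℕ):ℝ) ^ (-s) with hgdef
  have hg1 : g 1 > 2 := by
    rw [hgdef]
    simp only
    calc (2:ℝ) < ∑ q ∈ F, 1 / ((q:ℕ):ℝ) := hF2
      _ = ∑ q ∈ F, ((q:ℕ):ℝ) ^ (-(1:ℝ)) := by
          apply Finset.sum_congr rfl
          intro q _
          rw [Real.rpow_neg_one, one_div]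
  have hgc : ContinuousAt g 1 := by
    apply Continuous.continuousAt
    apply continuous_finset_sum
    intro q _
    exact cont_const_rpow_neg (by have := midx_two_le q; positivity)
  have hev : ∀ᶠ s in nhds (1:ℝ), 1 < g s :=
    hgc (isOpen_Ioi.mem_nhds (by linarith : (1:ℝ) < g 1))
  have hev' : ∀ᶠ s in nhdsWithin (1:ℝ) (Set.Ioi 1), 1 < g s ∧ 1 < s :=
    (hev.filter_mono nhdsWithin_le_nhds).and
      (eventually_mem_nhdsWithin.mono fun s hs => hs)
  obtain ⟨a, hga, ha1⟩ := hev'.exists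
  refine ⟨a, ha1, ?_⟩
  have hPT : 1 < PT p a := by
    calc (1:ℝ) < g a := hga
      _ = ∑ q ∈ F, ((q:ℕ):ℝ) ^ (-a) := rfl
      _ ≤ ∑' q : MIdx p, ((q:ℕ):ℝ) ^ (-a) :=
          Summable.sum_le_tsum F (fun q _ => (aux_rpow_pos (midx_two_le q) a).le) (summable_x ha1)
      _ ≤ PT p a := by
          apply Summable.tsum_le_tsum (fun q => aux_le_neg_log (aux_rpow_pos (midx_two_le q) a).le
            (aux_rpow_le_half (midx_two_le q) ha1.le)) (summable_x ha1) (summable_log ha1)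
  have hlog : Real.log (1 + (p:ℝ) ^ (-a)) ≤ 1 := by
    have h1 := aux_log_one_add_le (aux_rpow_pos hp.two_le a).le
    have h2 : (p:ℝ) ^ (-a) ≤ 1/2 := aux_rpow_le_half hp.two_le ha1.le
    linarith
  have hpa : (0:ℝ) < (p:ℝ) ^ a := Real.rpow_pos_of_pos (by exact_mod_cast hp.pos) _
  unfold Psi
  rw [← mul_sub]
  apply mul_pos hpa
  linarith

lemma exists_psi_neg {p : ℕ} (hp : p.Prime) : ∃ b : ℝ, 1 < b ∧ Psi p b < 0 := by
  have hp0 : (0:ℝ) < (p:ℝ) := by exact_mod_cast hp.pos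
  have hp1 : (1:ℝ) ≤ (p:ℝ) := by exact_mod_cast hp.one_lt.le
  set C : ℝ := ∑' q : MIdx p, ((q:ℕ):ℝ) ^ (-(2:ℝ)) with hCdef
  have hCsum : Summable (fun q : MIdx p => ((q:ℕ):ℝ) ^ (-(2:ℝ))) := summable_x one_lt_two
  have hC0 : 0 ≤ C := tsum_nonneg fun q => (aux_rpow_pos (midx_two_le q) 2).le
  have hbase : (1:ℝ) < ((p:ℝ) + 1) / (p:ℝ) := by
    rw [lt_div_iff₀ hp0]; linarith
  have hbpos : (0:ℝ) < ((p:ℝ) + 1) / (p:ℝ) := by positivity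
  have htend : Filter.Tendsto (fun x : ℝ => (((p:ℝ) + 1) / (p:ℝ)) ^ x) atTop atTop := by
    have hlogpos : 0 < Real.log (((p:ℝ) + 1) / (p:ℝ)) := Real.log_pos hbase
    have h1 : Filter.Tendsto (fun x : ℝ => Real.log (((p:ℝ) + 1) / (p:ℝ)) * x) atTop atTop :=
      Filter.tendsto_id.const_mul_atTop hlogpos
    exact (Real.tendsto_exp_atTop.comp h1).congr
      (fun x => (Real.rpow_def_of_pos hbpos x).symm)
  have hev : ∀ᶠ b : ℝ in atTop, 4 * C * ((p:ℝ) + 1) ^ 2 + 1 < (((p:ℝ) + 1) / (p:ℝ)) ^ b :=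
    htend.eventually_gt_atTop _
  obtain ⟨b, hbM, hb2⟩ := (hev.and (eventually_ge_atTop (2:ℝ))).exists
  refine ⟨b, by linarith, ?_⟩
  have hb1 : (1:ℝ) < b := by linarith
  -- PT bound
  have hPTle : PT p b ≤ 2 * ((p:ℝ) + 1) ^ (-(b - 2)) * C := by
    have hterm : ∀ q : MIdx p,
        -Real.log (1 - ((q:ℕ):ℝ) ^ (-b)) ≤ 2 * ((p:ℝ) + 1) ^ (-(b - 2)) * ((q:ℕ):ℝ) ^ (-(2:ℝ)) := by
      intro q
      have hq2 := midx_two_le q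
      have hqR : (0:ℝ) < ((q:ℕ):ℝ) := by positivity
      have hqp : (p:ℝ) + 1 ≤ ((q:ℕ):ℝ) := by
        have : p + 1 ≤ (q:ℕ) := q.2.2
        exact_mod_cast this
      have h1 : -Real.log (1 - ((q:ℕ):ℝ) ^ (-b)) ≤ 2 * ((q:ℕ):ℝ) ^ (-b) :=
        aux_neg_log_le (aux_rpow_pos hq2 b).le (aux_rpow_le_half hq2 hb1.le)
      have hsplit : ((q:ℕ):ℝ) ^ (-b) = ((q:ℕ):ℝ) ^ (-(2:ℝ)) * ((q:ℕ):ℝ) ^ (-(b - 2)) := by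
        rw [← Real.rpow_add hqR]; ring_nf
      have hmono : ((q:ℕ):ℝ) ^ (-(b - 2)) ≤ ((p:ℝ) + 1) ^ (-(b - 2)) := by
        rw [Real.rpow_neg hqR.le, Real.rpow_neg (by linarith : (0:ℝ) ≤ (p:ℝ) + 1)]
        apply inv_anti₀ (Real.rpow_pos_of_pos (by linarith) _)
        exact Real.rpow_le_rpow (by linarith) hqp (by linarith)
      have hq2pos := aux_rpow_pos hq2 2
      calc -Real.log (1 - ((q:ℕ):ℝ) ^ (-b)) ≤ 2 * ((q:ℕ):ℝ) ^ (-b) := h1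
        _ = 2 * (((q:ℕ):ℝ) ^ (-(2:ℝ)) * ((q:ℕ):ℝ) ^ (-(b - 2))) := by rw [hsplit]
        _ ≤ 2 * (((q:ℕ):ℝ) ^ (-(2:ℝ)) * ((p:ℝ) + 1) ^ (-(b - 2))) := by
            apply mul_le_mul_of_nonneg_left ?_ (by norm_num)
            exact mul_le_mul_of_nonneg_left hmono hq2pos.le
        _ = 2 * ((p:ℝ) + 1) ^ (-(b - 2)) * ((q:ℕ):ℝ) ^ (-(2:ℝ)) := by ring
    calc PT p b ≤ ∑' q : MIdx p, 2 * ((p:ℝ) + 1) ^ (-(b - 2)) * ((q:ℕ):ℝ) ^ (-(2:ℝ)) :=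
          Summable.tsum_le_tsum hterm (summable_log hb1) (hCsum.mul_left _)
      _ = 2 * ((p:ℝ) + 1) ^ (-(b - 2)) * C := tsum_mul_left
  -- lower bound on log
  have hpb0 := aux_rpow_pos hp.two_le b
  have hpbh := aux_rpow_le_half hp.two_le hb1.le
  have hlog : (p:ℝ) ^ (-b) / 2 ≤ Real.log (1 + (p:ℝ) ^ (-b)) :=
    aux_le_log_one_add hpb0.le (by linarith)
  -- main numeric comparison : 2*(p+1)^{-(b-2)}*C < p^{-b}/2
  have hkey : 2 * ((p:ℝ) + 1) ^ (-(b - 2)) * C < (p:ℝ) ^ (-b) / 2 := by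
    have hP1 : (0:ℝ) < (p:ℝ) + 1 := by linarith
    have e1 : ((p:ℝ) + 1) ^ (-(b - 2)) = ((p:ℝ) + 1) ^ (-b) * ((p:ℝ) + 1) ^ (2:ℝ) := by
      rw [← Real.rpow_add hP1]; ring_nf
    have e2 : ((p:ℝ) + 1) ^ (2:ℝ) = ((p:ℝ) + 1) ^ 2 := by
      rw [← Real.rpow_natCast ((p:ℝ) + 1) 2]; norm_num
    have hM := hbM
    rw [Real.div_rpow (by linarith) hp0.le] at hM
    -- hM : 4*C*(p+1)^2 + 1 < (p+1)^b / p^b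
    have hPb : (0:ℝ) < ((p:ℝ) + 1) ^ (-b) := Real.rpow_pos_of_pos hP1 _
    have hPbpos : (0:ℝ) < ((p:ℝ) + 1) ^ b := Real.rpow_pos_of_pos hP1 _
    have hpbpos : (0:ℝ) < (p:ℝ) ^ b := Real.rpow_pos_of_pos hp0 _
    have hcancel : ((p:ℝ) + 1) ^ (-b) * ((p:ℝ) + 1) ^ b = 1 := by
      rw [← Real.rpow_add hP1]; norm_num
    have hpninv : (p:ℝ) ^ (-b) = ((p:ℝ) ^ b)⁻¹ := Real.rpow_neg hp0.le b
    -- multiply hM by (p+1)^{-b} > 0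
    have step : (4 * C * ((p:ℝ) + 1) ^ 2 + 1) * ((p:ℝ) + 1) ^ (-b)
        < (((p:ℝ) + 1) ^ b / (p:ℝ) ^ b) * ((p:ℝ) + 1) ^ (-b) :=
      mul_lt_mul_of_pos_right hM hPb
    have : (((p:ℝ) + 1) ^ b / (p:ℝ) ^ b) * ((p:ℝ) + 1) ^ (-b) = (p:ℝ) ^ (-b) := by
      rw [hpninv]; field_simp; rw [mul_comm] at hcancel ⊢; nlinarith [hcancel]
    rw [this] at step
    rw [e1, e2]
    nlinarith [hPb]
  unfold Psi
  rw [← mul_sub]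
  have hpbb : (0:ℝ) < (p:ℝ) ^ b := Real.rpow_pos_of_pos hp0 _
  apply mul_neg_of_pos_of_neg hpbb
  linarith

/-- For every prime `p` there is `r_p > 1` such that for all `s > 1`, `p` is `s`-mighty iff
`s > r_p`. In particular mightiness is upward closed in the exponent, and every prime is
`s`-mighty for all sufficiently large `s`. -/
theorem stmt_15 (p : ℕ) (hp : p.Prime) :
    (∃ rp : ℝ, 1 < rp ∧ ∀ s : ℝ, 1 < s → (IsMighty s p ↔ rp < s)) ∧
    (∀ r s : ℝ, 1 < r → r < s → IsMighty r p → IsMighty s p) ∧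
    (∃ s₀ : ℝ, ∀ s : ℝ, s₀ ≤ s → IsMighty s p) := by
  obtain ⟨a, ha1, haP⟩ := exists_psi_pos hp
  obtain ⟨b, hb1, hbP⟩ := exists_psi_neg hp
  set S : Set ℝ := {s | 1 < s ∧ Psi p s < 0} with hSdef
  have hbS : b ∈ S := ⟨hb1, hbP⟩
  have hSne : S.Nonempty := ⟨b, hbS⟩
  have hSbdd : BddBelow S := ⟨1, fun s hs => hs.1.le⟩
  set rp : ℝ := sInf S with hrpdef
  have haS : ∀ s ∈ S, a < s := by
    rintro s ⟨hs1, hsneg⟩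
    by_contra hcon
    push_neg at hcon
    rcases eq_or_lt_of_le hcon with heq | hlt
    · rw [← heq] at haP; linarith
    · have := Psi_strictAntiOn hp (Set.mem_Ioi.mpr hs1) (Set.mem_Ioi.mpr ha1) hlt
      linarith
  have hrp1 : 1 < rp := lt_of_lt_of_le ha1 (le_csInf hSne fun s hs => (haS s hs).le)
  have hiff : ∀ s : ℝ, 1 < s → (Psi p s < 0 ↔ rp < s) := by
    intro s hs1
    constructor
    · intro hneg
      have hle : rp ≤ s := csInf_le hSbdd ⟨hs1, hneg⟩
      rcases eq_or_lt_of_le hle with heq | hlt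
      · exfalso
        have hcont := Psi_continuousAt hp hs1
        have hev : ∀ᶠ u in nhds s, Psi p u < 0 :=
          hcont (isOpen_Iio.mem_nhds (Set.mem_Iio.mpr hneg))
        have hev1 : ∀ᶠ u in nhds s, 1 < u := eventually_gt_nhds hs1
        have hev' : ∀ᶠ u in nhdsWithin s (Set.Iio s),
            (Psi p u < 0 ∧ 1 < u) ∧ u < s :=
          (((hev.and hev1).filter_mono nhdsWithin_le_nhds).and
            (eventually_mem_nhdsWithin.mono fun u hu => hu))
        obtain ⟨u, ⟨⟨huP, hu1⟩, hus⟩⟩ := hev'.exists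
        have : rp ≤ u := csInf_le hSbdd ⟨hu1, huP⟩
        rw [heq] at this
        linarith
      · exact hlt
    · intro hlt
      obtain ⟨s', hs'S, hs's⟩ := exists_lt_of_csInf_lt hSne hlt
      rcases eq_or_lt_of_le (le_of_lt hs's) with heq | hlt'
      · exact heq ▸ hs'S.2
      · have := Psi_strictAntiOn hp (Set.mem_Ioi.mpr hs'S.1) (Set.mem_Ioi.mpr hs1) hlt'
        linarith [hs'S.2]
  have hmain : ∀ s : ℝ, 1 < s → (IsMighty s p ↔ rp < s) := by
    intro s hs1
    rw [isMighty_iff_Psi hp hs1]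
    exact hiff s hs1
  refine ⟨⟨rp, hrp1, hmain⟩, ?_, ?_⟩
  · intro r s hr1 hrs hmr
    have hs1 : 1 < s := hr1.trans hrs
    exact (hmain s hs1).mpr (((hmain r hr1).mp hmr).trans hrs)
  · refine ⟨rp + 1, fun s hs => ?_⟩
    have hs1 : 1 < s := by linarith
    exact (hmain s hs1).mpr (by linarith)
end
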